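/- arXiv:1607.02543 — 7 statements merged into one kernel-verified Lean document; each statement's English description precedes it below -/
import Mathlib

section
/- Suppose k and m are positive integers with gcd(m,k) = 1 and m ≤ k/(1 + g(k)). Then P(k) > (g(m)−1)·k; that is, there exists a residue ℓ coprime to k such that every prime p with p ≡ ℓ (mod k) satisfies p > (g(m)−1)·k. -/
/-- Jacobsthal's function: the smallest positive integer `g` such that every `g`
consecutive integers contain an integer coprime to `m`. -/
noncomputable def jacobsthal (m : ℕ) : ℕ :=
  sInf {g : ℕ | 0 < g ∧ ∀ a : ℤ, ∃ n : ℤ, a ≤ n ∧ n < a + g ∧ Int.gcd n m = 1}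


-- test helper lemmas
lemma gcd_congr (a b : ℤ) (n : ℕ) (h : (n:ℤ) ∣ b - a) : Int.gcd a n = Int.gcd b n := by
  have key : ∀ x y : ℤ, (n:ℤ) ∣ y - x → ((Int.gcd x n : ℤ)) ∣ (Int.gcd y n : ℤ) := by
    intro x y hxy
    apply Int.dvd_coe_gcd
    · have h1 : (Int.gcd x n : ℤ) ∣ x := Int.gcd_dvd_left _ _
      have h2 : (Int.gcd x n : ℤ) ∣ (n:ℤ) := Int.gcd_dvd_right _ _
      have h3 := h2.trans hxy
      have : y = x + (y - x) := by ring
      rw [this]; exact dvd_add h1 h3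
    · exact Int.gcd_dvd_right _ _
  exact Nat.dvd_antisymm (Int.natCast_dvd_natCast.mp (key a b h))
    (Int.natCast_dvd_natCast.mp (key b a (by simpa [neg_sub] using dvd_neg.mpr h)))

lemma mem_S (m : ℕ) (hm : 0 < m) :
    m ∈ {g : ℕ | 0 < g ∧ ∀ a : ℤ, ∃ n : ℤ, a ≤ n ∧ n < a + g ∧ Int.gcd n m = 1} := by
  have hmz : ((m:ℤ)) ≠ 0 := by exact_mod_cast hm.ne'
  have hmp : (0:ℤ) < m := by exact_mod_cast hm
  refine ⟨hm, fun a => ⟨a + (1 - a) % m, ?_, ?_, ?_⟩⟩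
  · have := Int.emod_nonneg (1 - a) hmz
    linarith
  · have := Int.emod_lt_of_pos (1 - a) hmp
    linarith
  · have hd : (m:ℤ) ∣ 1 - (a + (1 - a) % m) := by
      have h2 := Int.mul_ediv_add_emod (1 - a) m
      exact ⟨(1 - a) / m, by linarith⟩
    rw [gcd_congr _ 1 m hd]
    simp

lemma jac_le (m : ℕ) (hm : 0 < m) : jacobsthal m ≤ m := Nat.sInf_le (mem_S m hm)

lemma jac_mem (m : ℕ) (hm : 0 < m) :
    0 < jacobsthal m ∧ ∀ a : ℤ, ∃ n : ℤ, a ≤ n ∧ n < a + (jacobsthal m : ℤ) ∧ Int.gcd n m = 1 :=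
  Nat.sInf_mem ⟨m, mem_S m hm⟩

/-- If `k, m` are positive integers with `gcd(m,k) = 1` and `m ≤ k/(1 + g(k))`, then
`P(k) > (g(m) - 1)·k`: there is a residue `ℓ` coprime to `k` such that every prime
`p ≡ ℓ (mod k)` satisfies `p > (g(m)-1)·k`. -/
theorem P_gt_of_jacobsthal (k m : ℕ) (hk : 0 < k) (hm : 0 < m)
    (hcop : Nat.Coprime m k)
    (hle : (m : ℝ) ≤ (k : ℝ) / (1 + jacobsthal k)) :
    ∃ ℓ : ℕ, Nat.Coprime ℓ k ∧
      ∀ p : ℕ, p.Prime → p ≡ ℓ [MOD k] → (jacobsthal m - 1) * k < p := by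
  obtain ⟨hGpos, hGall⟩ := jac_mem k hk
  -- translate the real hypothesis
  have hkG : m * (1 + jacobsthal k) ≤ k := by
    have h1 : (0:ℝ) < 1 + (jacobsthal k : ℝ) := by positivity
    rw [le_div_iff₀ h1] at hle
    exact_mod_cast hle
  by_cases hJ2 : jacobsthal m ≤ 1
  · refine ⟨1, Nat.coprime_one_left k, fun p pp _ => ?_⟩
    have h0 : (jacobsthal m - 1) * k = 0 := by
      have : jacobsthal m - 1 = 0 := by omega
      simp [this]
    rw [h0]; exact pp.pos
  push_neg at hJ2
  -- bad window for m
  have hbad : ∃ a : ℤ, ∀ n : ℤ, a ≤ n → n < a + ((jacobsthal m - 1 : ℕ):ℤ) →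
      Int.gcd n m ≠ 1 := by
    have hnot : jacobsthal m - 1 ∉
        {g : ℕ | 0 < g ∧ ∀ a : ℤ, ∃ n : ℤ, a ≤ n ∧ n < a + g ∧ Int.gcd n m = 1} :=
      Nat.notMem_of_lt_sInf (show jacobsthal m - 1 < jacobsthal m by omega)
    by_contra hcon
    push_neg at hcon
    refine hnot ⟨by omega, fun a => ?_⟩
    obtain ⟨n, h1, h2, h3⟩ := hcon a
    exact ⟨n, h1, h2, h3⟩
  obtain ⟨a, hbad⟩ := hbad
  -- inverse of m mod k
  have hcopZ : IsCoprime (m:ℤ) (k:ℤ) := by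
    rw [Int.isCoprime_iff_gcd_eq_one, Int.gcd_natCast_natCast]; exact hcop
  obtain ⟨u, v, huv⟩ := id hcopZ
  have hmz : ((m:ℤ)) ≠ 0 := by exact_mod_cast hm.ne'
  have hmp : (0:ℤ) < m := by exact_mod_cast hm
  have hkz : (0:ℤ) < k := by exact_mod_cast hk
  -- construct the residue L
  obtain ⟨L, hLm, hLk, hLcop, hLak⟩ :
      ∃ L : ℤ, (m:ℤ) < L ∧ L ≤ k ∧ Int.gcd L k = 1 ∧ (m:ℤ) ∣ L - a * k := by
    -- first the residue class c' mod m, with 1 ≤ c' ≤ m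
    obtain ⟨c', hc'1, hc'm, hc'ak⟩ : ∃ c' : ℤ, 1 ≤ c' ∧ c' ≤ m ∧ (m:ℤ) ∣ c' - a * k := by
      have hc0 : 0 ≤ (a * k) % (m:ℤ) := Int.emod_nonneg _ hmz
      have hcm : (a * k) % (m:ℤ) < m := Int.emod_lt_of_pos _ hmp
      have hcak : (m:ℤ) ∣ (a * k) % (m:ℤ) - a * k := by
        have h2 := Int.mul_ediv_add_emod (a * k) (m:ℤ)
        exact ⟨-(a * k / m), by linarith⟩
      by_cases h : (a * k) % (m:ℤ) = 0
      · refine ⟨m, by exact_mod_cast hm, le_refl _, ?_⟩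
        have : (m:ℤ) - a * k = ((m:ℤ) - (a * k) % m) + ((a * k) % (m:ℤ) - a * k) := by ring
        rw [this]
        exact dvd_add ⟨1, by rw [h]; ring⟩ hcak
      · exact ⟨(a * k) % (m:ℤ), by omega, by omega, hcak⟩
    -- then pick t ∈ [1, G] with c' + t*m coprime to k
    obtain ⟨n, hn1, hn2, hn3⟩ := hGall (u * c' + 1)
    refine ⟨c' + (n - u * c') * m, by nlinarith, ?_, ?_, ?_⟩
    · have h1 : n - u * c' ≤ jacobsthal k := by omega
      have h2 : (m:ℤ) * (1 + jacobsthal k) ≤ k := by exact_mod_cast hkG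
      nlinarith
    · have hdvd : (k:ℤ) ∣ (m * n) - (c' + (n - u * c') * m) := by
        have he : (m:ℤ) * n - (c' + (n - u * c') * m) = c' * (u * (m:ℤ) + v * k - 1)
            + (- c' * v) * k := by ring
        rw [he]
        exact dvd_add (Dvd.dvd.mul_left ⟨0, by rw [huv]; ring⟩ _) ⟨-c' * v, by ring⟩
      rw [gcd_congr _ (m * n) k hdvd]
      have h1 : IsCoprime ((m:ℤ) * n) (k:ℤ) := by
        apply IsCoprime.mul_left hcopZ
        rw [Int.isCoprime_iff_gcd_eq_one]; exact hn3
      rwa [Int.isCoprime_iff_gcd_eq_one] at h1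
    · have : c' + (n - u * c') * m - a * k = (c' - a * k) + m * (n - u * c') := by ring
      rw [this]
      exact dvd_add hc'ak ⟨n - u * c', rfl⟩
  -- convert to ℕ
  have hLnat : ((L.toNat : ℕ) : ℤ) = L := Int.toNat_of_nonneg (by omega)
  refine ⟨L.toNat, ?_, ?_⟩
  · have h1 : Int.gcd ((L.toNat:ℕ):ℤ) ((k:ℕ):ℤ) = Nat.gcd L.toNat k :=
      Int.gcd_natCast_natCast _ _
    rw [Nat.Coprime, ← h1, hLnat]; exact hLcop
  intro p pp hpℓ
  by_contra hple
  push_neg at hple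
  have hdvd : (k:ℤ) ∣ ((L.toNat:ℕ):ℤ) - (p:ℤ) := Nat.ModEq.dvd hpℓ
  rw [hLnat] at hdvd
  have hp2 : 2 ≤ p := pp.two_le
  have hpL : L ≤ (p:ℤ) := by
    by_contra hlt
    push_neg at hlt
    have h2 : (k:ℤ) ≤ L - p := Int.le_of_dvd (by omega) hdvd
    omega
  obtain ⟨j, hj⟩ : ∃ j : ℤ, (p:ℤ) - L = k * j := by
    obtain ⟨j0, hj0⟩ := hdvd
    exact ⟨-j0, by rw [mul_neg, ← hj0]; ring⟩
  have hj0 : 0 ≤ j := by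
    by_contra hneg
    push_neg at hneg
    nlinarith
  have hJcast : ((jacobsthal m - 1 : ℕ):ℤ) = (jacobsthal m : ℤ) - 1 := by
    have h1 : 1 ≤ jacobsthal m := by omega
    push_cast [Nat.cast_sub h1]; ring
  have hpbound : (p:ℤ) ≤ ((jacobsthal m : ℤ) - 1) * k := by
    have h1 : (p:ℕ) ≤ (jacobsthal m - 1) * k := by omega
    calc (p:ℤ) ≤ ((jacobsthal m - 1:ℕ) : ℤ) * k := by exact_mod_cast h1
      _ = ((jacobsthal m:ℤ) - 1) * k := by rw [hJcast]
  have hjJ : j < (jacobsthal m : ℤ) - 1 := by nlinarith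
  -- p ≡ (a+j)*k mod m, so p shares a prime factor with m
  have hpcong : (m:ℤ) ∣ (p:ℤ) - (a + j) * k := by
    have he : (p:ℤ) - (a + j) * k = (L - a * k) + ((p:ℤ) - L - j * k) := by ring
    rw [he]
    refine dvd_add hLak ⟨0, by rw [hj]; ring⟩
  have hgcd := hbad (a + j) (by omega) (by rw [hJcast]; omega)
  obtain ⟨q, hq, hqd⟩ := Nat.exists_prime_and_dvd hgcd
  have hqaj : (q:ℤ) ∣ a + j := (Int.natCast_dvd_natCast.mpr hqd).trans (Int.gcd_dvd_left _ _)
  have hqm : (q:ℤ) ∣ (m:ℤ) := (Int.natCast_dvd_natCast.mpr hqd).trans (Int.gcd_dvd_right _ _)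
  have hqp : (q:ℤ) ∣ (p:ℤ) := by
    have h1 : (q:ℤ) ∣ (p:ℤ) - (a + j) * k := hqm.trans hpcong
    have h2 : (q:ℤ) ∣ (a + j) * k := hqaj.mul_right k
    have he : (p:ℤ) = ((p:ℤ) - (a + j) * k) + (a + j) * k := by ring
    rw [he]; exact dvd_add h1 h2
  have hqpn : q ∣ p := Int.natCast_dvd_natCast.mp hqp
  have hqep : q = p := (Nat.prime_dvd_prime_iff_eq hq pp).mp hqpn
  have hpm : p ∣ m := by rw [← hqep]; exact_mod_cast hqm
  have : p ≤ m := Nat.le_of_dvd hm hpm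
  omega
end

section
/- Let m be a positive integer and let x < y be integers. Suppose that for each prime p dividing m an integer a_p is given, such that for every integer n with x < n ≤ y there is some prime p | m with n ≡ a_p (mod p). Then there exists an integer t such that gcd(t+n, m) > 1 for every integer n with x < n ≤ y; consequently g(m) > y − x. -/
lemma crt_aux (a : ℕ → ℤ) (s : Finset ℕ) (hs : ∀ p ∈ s, p.Prime) :
    ∃ t : ℤ, ∀ p ∈ s, (p : ℤ) ∣ t + a p := by
  classical
  induction s using Finset.induction_on with
  | empty => exact ⟨0, by simp⟩
  | @insert p s hp ih =>
    obtain ⟨t, ht⟩ := ih (fun q hq => hs q (Finset.mem_insert_of_mem hq))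
    have hpp : p.Prime := hs p (Finset.mem_insert_self p s)
    set P : ℕ := ∏ q ∈ s, q with hP
    have hcop : Nat.Coprime p P := by
      rw [Nat.Prime.coprime_iff_not_dvd hpp]
      intro hdvd
      obtain ⟨q, hq, hpq⟩ := hpp.prime.exists_mem_finset_dvd hdvd
      have := ((Nat.prime_dvd_prime_iff_eq hpp (hs q (Finset.mem_insert_of_mem hq))).mp hpq)
      exact hp (this ▸ hq)
    set A : ℤ := Int.gcdA p P
    set B : ℤ := Int.gcdB p P
    have hbez : (p : ℤ) * A + (P : ℤ) * B = 1 := by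
      have := Int.gcd_eq_gcd_ab (p : ℤ) (P : ℤ)
      rw [Int.gcd_natCast_natCast, hcop] at this
      exact_mod_cast this.symm
    set t' : ℤ := t * A * p + (-a p) * B * P with ht'
    refine ⟨t', fun q hq => ?_⟩
    rcases Finset.mem_insert.mp hq with rfl | hq
    · exact ⟨t * A + a q * A, by linear_combination (-(a q)) * hbez⟩
    · have hqP : (q : ℤ) ∣ (P : ℤ) := by
        exact_mod_cast Finset.dvd_prod_of_mem _ hq
      have h2 : t' - t = ((-t - a p) * B) * P := by linear_combination t * hbez
      have h3 : t' + a q = (t' - t) + (t + a q) := by ring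
      rw [h3, h2]
      exact dvd_add (Dvd.dvd.mul_left hqP _) (ht q hq)

/-- If for each prime `p ∣ m` a residue `a p` is given such that every integer
`n ∈ (x, y]` satisfies `n ≡ a p (mod p)` for some prime `p ∣ m`, then there is an
integer `t` with `gcd(t + n, m) > 1` for all `n ∈ (x, y]`; consequently
`g(m) > y - x`. -/
theorem covering_system_gives_jacobsthal (m : ℕ) (hm : 0 < m) (x y : ℤ) (hxy : x < y)
    (a : ℕ → ℤ)
    (hcover : ∀ n : ℤ, x < n → n ≤ y →
      ∃ p : ℕ, p.Prime ∧ (p : ℕ) ∣ m ∧ n ≡ a p [ZMOD (p : ℤ)]) :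
    (∃ t : ℤ, ∀ n : ℤ, x < n → n ≤ y → 1 < Int.gcd (t + n) m) ∧
      y - x < (jacobsthal m : ℤ) := by
  classical
  have hmZ : (0 : ℤ) < (m : ℤ) := by exact_mod_cast hm
  obtain ⟨t, ht⟩ := crt_aux a m.primeFactors
    (fun p hp => Nat.prime_of_mem_primeFactors hp)
  have key : ∀ n : ℤ, x < n → n ≤ y → 1 < Int.gcd (t + n) m := by
    intro n hxn hny
    obtain ⟨p, hpp, hpm, hmod⟩ := hcover n hxn hny
    have h1 : (p : ℤ) ∣ t + a p := ht p (Nat.mem_primeFactors.mpr ⟨hpp, hpm, hm.ne'⟩)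
    have h2 : (p : ℤ) ∣ n - a p := hmod.symm.dvd
    have h3 : (p : ℤ) ∣ t + n := by
      have h : t + n = (t + a p) + (n - a p) := by ring
      rw [h]; exact dvd_add h1 h2
    have h4 : (p : ℤ) ∣ (m : ℤ) := by exact_mod_cast hpm
    have h5 : (p : ℤ) ∣ (Int.gcd (t + n) m : ℤ) := Int.dvd_coe_gcd h3 h4
    have h6 : p ∣ Int.gcd (t + n) m := by exact_mod_cast h5
    have hpos : 0 < Int.gcd (t + n) m := by
      rw [Int.gcd_pos_iff]; right; exact hmZ.ne'
    exact lt_of_lt_of_le hpp.one_lt (Nat.le_of_dvd hpos h6)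
  refine ⟨⟨t, key⟩, ?_⟩
  have hmS : m ∈ {g : ℕ | 0 < g ∧ ∀ a : ℤ, ∃ n : ℤ, a ≤ n ∧ n < a + g ∧ Int.gcd n m = 1} := by
    refine ⟨hm, fun b => ?_⟩
    refine ⟨b + (1 - b) % m, le_add_of_nonneg_right (Int.emod_nonneg _ hmZ.ne'), ?_, ?_⟩
    · have := Int.emod_lt_of_pos (1 - b) hmZ
      linarith
    · have hd : b + (1 - b) % m - 1 = (m : ℤ) * (-((1 - b) / m)) := by
        rw [Int.emod_def]; ring
      refine Int.isCoprime_iff_gcd_eq_one.mp ⟨1, (1 - b) / m, by linarith⟩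
  have hlow : ∀ g ∈ {g : ℕ | 0 < g ∧ ∀ a : ℤ, ∃ n : ℤ, a ≤ n ∧ n < a + g ∧ Int.gcd n m = 1},
      y - x < (g : ℤ) := by
    rintro g ⟨hg0, hg⟩
    by_contra hle
    push_neg at hle
    obtain ⟨n, hn1, hn2, hn3⟩ := hg (t + x + 1)
    have hx' : x < n - t := by linarith
    have hy' : n - t ≤ y := by linarith
    have := key (n - t) hx' hy'
    rw [show t + (n - t) = n by ring, hn3] at this
    exact absurd this (by norm_num)
  have hmem := Nat.sInf_mem (⟨m, hmS⟩ : ∃ g, g ∈ _)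
  have := hlow _ hmem
  exact this
end

section
/- For every ε ∈ (0,1/2) and every A > 0 there is a constant C = C(ε,A) such that for all N ≥ 3: the number of integers k with e^{e^{e^e}} ≤ k ≤ N having more than exp((1/2−ε)·log₂k·log₄k/log₃k) distinct prime factors is at most C·N/(log N)^A. In particular, the set of k with at most exp((1/2−ε)·log₂k·log₄k/log₃k) distinct prime factors has natural density one. -/
open Filter Finset

lemma two_pow_omega_le (n : ℕ) (hn : n ≠ 0) : 2 ^ n.primeFactors.card ≤ n.divisors.card := by
  rw [Nat.card_divisors hn]
  calc 2 ^ n.primeFactors.card = ∏ _p ∈ n.primeFactors, 2 := by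
        rw [Finset.prod_const]
    _ ≤ n.primeFactors.prod (n.factorization · + 1) := by
        apply Finset.prod_le_prod
        · intros; positivity
        · intro p hp
          have : n.factorization p ≠ 0 := by
            rw [← Nat.support_factorization] at hp; exact Finsupp.mem_support_iff.mp hp
          omega

lemma sum_divisors_card_le (N : ℕ) :
    (∑ k ∈ Finset.Ioc 0 N, (k.divisors.card : ℝ)) ≤ N * (1 + Real.log N) := by
  have h1 : ∀ k ∈ Finset.Ioc 0 N, k.divisors = (Finset.Ioc 0 N).filter (· ∣ k) := by
    intro k hk
    rw [Finset.mem_Ioc] at hk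
    ext d
    simp only [Nat.mem_divisors, Finset.mem_filter, Finset.mem_Ioc]
    constructor
    · rintro ⟨hd, -⟩
      exact ⟨⟨Nat.pos_of_dvd_of_pos hd hk.1, (Nat.le_of_dvd hk.1 hd).trans hk.2⟩, hd⟩
    · rintro ⟨-, hd⟩
      exact ⟨hd, by omega⟩
  have h2 : (∑ k ∈ Finset.Ioc 0 N, (k.divisors.card : ℝ))
      = ∑ d ∈ Finset.Ioc 0 N, ((N / d : ℕ) : ℝ) := by
    rw [Finset.sum_congr rfl (fun k hk => by rw [h1 k hk])]
    simp_rw [Finset.card_filter]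
    push_cast
    rw [Finset.sum_comm]
    congr 1
    ext d
    rw [← Nat.Ioc_filter_dvd_card_eq_div, Finset.card_filter]
    push_cast
    rfl
  rw [h2]
  have h3 : ∀ d ∈ Finset.Ioc 0 N, ((N / d : ℕ) : ℝ) ≤ (N : ℝ) * (d : ℝ)⁻¹ := by
    intro d hd
    rw [Finset.mem_Ioc] at hd
    calc ((N / d : ℕ) : ℝ) ≤ (N : ℝ) / d := Nat.cast_div_le
      _ = (N : ℝ) * (d : ℝ)⁻¹ := div_eq_mul_inv _ _
  calc (∑ d ∈ Finset.Ioc 0 N, ((N / d : ℕ) : ℝ)) ≤ ∑ d ∈ Finset.Ioc 0 N, (N : ℝ) * (d : ℝ)⁻¹ :=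
        Finset.sum_le_sum h3
    _ = (N : ℝ) * ∑ d ∈ Finset.Icc 1 N, (d : ℝ)⁻¹ := by
        rw [Finset.mul_sum]
        congr 1
    _ ≤ (N : ℝ) * (1 + Real.log N) := by
        apply mul_le_mul_of_nonneg_left _ (Nat.cast_nonneg N)
        have := harmonic_le_one_add_log N
        rw [harmonic_eq_sum_Icc] at this
        calc (∑ d ∈ Finset.Icc 1 N, (d : ℝ)⁻¹) = ((∑ d ∈ Finset.Icc 1 N, (d : ℚ)⁻¹ : ℚ) : ℝ) := by
              push_cast; rfl
          _ ≤ 1 + Real.log N := by exact_mod_cast this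


lemma exp_facts : (1:ℝ) < Real.exp 1 ∧ (2:ℝ) ≤ Real.exp 1 ∧ Real.exp 1 ≤ Real.exp (Real.exp 1)
    ∧ (2:ℝ) ≤ Real.exp (Real.exp 1) ∧ Real.exp (Real.exp 1) ≤ Real.exp (Real.exp (Real.exp 1)) := by
  have h1 : (2:ℝ) ≤ Real.exp 1 := by
    have := Real.add_one_le_exp (1:ℝ); linarith
  have h2 : (1:ℝ) < Real.exp 1 := by linarith
  have h3 : Real.exp 1 ≤ Real.exp (Real.exp 1) := Real.exp_le_exp.mpr (by linarith)
  exact ⟨h2, h1, h3, by linarith, Real.exp_le_exp.mpr (by linarith)⟩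

lemma f_lower (c : ℝ) (hc : 0 ≤ c) (N k : ℕ)
    (hE : Real.exp (Real.exp (Real.exp (Real.exp 1))) ≤ (k:ℝ))
    (hsq : Real.sqrt N < (k:ℝ)) (hkN : (k:ℝ) ≤ (N:ℝ)) :
    c * (Real.log (Real.log N) - Real.log 2) / Real.log (Real.log (Real.log N)) ≤
    c * Real.log (Real.log k) * Real.log (Real.log (Real.log (Real.log k))) /
      Real.log (Real.log (Real.log k)) := by
  obtain ⟨he1, he2, he3, he4, he5⟩ := exp_facts
  set x : ℝ := (k:ℝ) with hx
  have hxpos : (0:ℝ) < x := lt_of_lt_of_le (Real.exp_pos _) hE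
  have hNpos : (0:ℝ) < (N:ℝ) := lt_of_lt_of_le hxpos hkN
  -- lower chain on x
  have hl1 : Real.exp (Real.exp (Real.exp 1)) ≤ Real.log x :=
    (Real.le_log_iff_exp_le hxpos).mpr hE
  have hl1p : (0:ℝ) < Real.log x := lt_of_lt_of_le (Real.exp_pos _) hl1
  have hl2 : Real.exp (Real.exp 1) ≤ Real.log (Real.log x) :=
    (Real.le_log_iff_exp_le hl1p).mpr hl1
  have hl2p : (0:ℝ) < Real.log (Real.log x) := lt_of_lt_of_le (Real.exp_pos _) hl2
  have hl3 : Real.exp 1 ≤ Real.log (Real.log (Real.log x)) :=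
    (Real.le_log_iff_exp_le hl2p).mpr hl2
  have hl3p : (0:ℝ) < Real.log (Real.log (Real.log x)) := lt_of_lt_of_le (Real.exp_pos _) hl3
  have hl4 : (1:ℝ) ≤ Real.log (Real.log (Real.log (Real.log x))) := by
    have := (Real.le_log_iff_exp_le hl3p).mpr (by simpa using hl3)
    simpa using this
  -- same chain on N (since x ≤ N)
  have hEN : Real.exp (Real.exp (Real.exp (Real.exp 1))) ≤ (N:ℝ) := le_trans hE hkN
  have hn1 : Real.exp (Real.exp (Real.exp 1)) ≤ Real.log N :=
    (Real.le_log_iff_exp_le hNpos).mpr hEN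
  have hn1p : (0:ℝ) < Real.log N := lt_of_lt_of_le (Real.exp_pos _) hn1
  have hn2 : Real.exp (Real.exp 1) ≤ Real.log (Real.log N) :=
    (Real.le_log_iff_exp_le hn1p).mpr hn1
  have hn2p : (0:ℝ) < Real.log (Real.log N) := lt_of_lt_of_le (Real.exp_pos _) hn2
  -- upper: log₃ x ≤ log₃ N
  have hu1 : Real.log x ≤ Real.log N := Real.log_le_log hxpos hkN
  have hu2 : Real.log (Real.log x) ≤ Real.log (Real.log N) := Real.log_le_log hl1p hu1
  have hu3 : Real.log (Real.log (Real.log x)) ≤ Real.log (Real.log (Real.log N)) :=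
    Real.log_le_log hl2p hu2
  have hb : (0:ℝ) < Real.log (Real.log (Real.log N)) := lt_of_lt_of_le hl3p hu3
  -- lower: log₂ x ≥ log₂ N - log 2
  have hsx : Real.log N / 2 ≤ Real.log x := by
    have hsqpos : (0:ℝ) < Real.sqrt N := Real.sqrt_pos.mpr hNpos
    have := Real.log_le_log hsqpos (le_of_lt hsq)
    rwa [Real.log_sqrt (le_of_lt hNpos)] at this
  have hlow : Real.log (Real.log N) - Real.log 2 ≤ Real.log (Real.log x) := by
    have h2 : Real.log (Real.log N / 2) ≤ Real.log (Real.log x) :=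
      Real.log_le_log (by linarith) hsx
    rwa [Real.log_div (ne_of_gt hn1p) (by norm_num)] at h2
  -- combine
  set a := Real.log (Real.log N) - Real.log 2 with ha
  set b := Real.log (Real.log (Real.log N)) with hbb
  set A' := Real.log (Real.log x) with hA
  set B := Real.log (Real.log (Real.log x)) with hB
  set D := Real.log (Real.log (Real.log (Real.log x))) with hD
  have haA : a ≤ A' := hlow
  have hApos : (0:ℝ) < A' := hl2p
  have key : a / b ≤ A' * D / B := by
    have h1 : a / b ≤ A' / b := by gcongr
    have h2 : A' / b ≤ A' / B := by
      apply div_le_div_of_nonneg_left (le_of_lt hApos) hl3p hu3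
    have h3 : A' / B ≤ A' * D / B := by
      apply div_le_div_of_nonneg_right _ (le_of_lt hl3p) |>.trans_eq rfl
      nlinarith
    linarith
  calc c * a / b = c * (a / b) := by ring
    _ ≤ c * (A' * D / B) := mul_le_mul_of_nonneg_left key hc
    _ = c * A' * D / B := by ring


-- exp w ≥ w^2/4 for w ≥ 0
lemma exp_ge_sq (w : ℝ) (hw : 0 ≤ w) : w^2/4 ≤ Real.exp w := by
  have h := Real.add_one_le_exp (w/2)
  have h2 : (w/2)^2 ≤ (w/2+1)^2 := by nlinarith
  have h3 : (w/2+1)^2 ≤ (Real.exp (w/2))^2 := by nlinarith [Real.exp_pos (w/2)]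
  have h4 : (Real.exp (w/2))^2 = Real.exp w := by
    rw [sq, ← Real.exp_add]; norm_num
  nlinarith

lemma exp_ge_quartic (w : ℝ) (hw : 0 ≤ w) : w^4/256 ≤ Real.exp w := by
  have h := exp_ge_sq (w/2) (by linarith)
  have h2 : ((w/2)^2/4)^2 ≤ (Real.exp (w/2))^2 := by nlinarith [Real.exp_pos (w/2), sq_nonneg (w/2)]
  have h4 : (Real.exp (w/2))^2 = Real.exp w := by rw [sq, ← Real.exp_add]; norm_num
  nlinarith

lemma event_u (c A : ℝ) (hc : 0 < c) (hA : 0 < A) :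
    ∀ᶠ u : ℝ in atTop,
      Real.log 2 + u * (A+1) ≤ Real.exp (c * (u - Real.log 2) / Real.log u) * Real.log 2 := by
  have hlog2 : (0:ℝ) < Real.log 2 := Real.log_pos (by norm_num)
  have hlog2' : Real.log 2 < 1 := by
    have := Real.log_lt_sub_one_of_pos (x := 2) (by norm_num) (by norm_num); linarith
  set K : ℝ := 65536 * (1 + (A+1)/Real.log 2) / c^4 with hK
  filter_upwards [eventually_ge_atTop (4:ℝ), eventually_ge_atTop K] with u hu4 huK
  have hupos : (0:ℝ) < u := by linarith
  have hsq : (0:ℝ) < Real.sqrt u := Real.sqrt_pos.mpr hupos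
  have hsqu : Real.sqrt u ^ 2 = u := Real.sq_sqrt (le_of_lt hupos)
  have hlogu_pos : (0:ℝ) < Real.log u := Real.log_pos (by linarith)
  -- log u ≤ 2 √u
  have hloglesqrt : Real.log u ≤ 2 * Real.sqrt u := by
    have h1 : Real.log u = 2 * Real.log (Real.sqrt u) := by
      rw [Real.log_sqrt (le_of_lt hupos)]; ring
    have h2 : Real.log (Real.sqrt u) ≤ Real.sqrt u - 1 :=
      Real.log_le_sub_one_of_pos hsq
    nlinarith
  -- z ≥ (c/4) √u
  set z := c * (u - Real.log 2) / Real.log u with hz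
  have hz1 : c / 4 * Real.sqrt u ≤ z := by
    have hnum : c * (u/2) ≤ c * (u - Real.log 2) := by
      apply mul_le_mul_of_nonneg_left _ (le_of_lt hc); linarith
    have h1 : c * (u/2) / (2 * Real.sqrt u) ≤ c * (u - Real.log 2) / Real.log u := by
      apply div_le_div₀ (by nlinarith) hnum hlogu_pos hloglesqrt
    have h2 : c * (u/2) / (2 * Real.sqrt u) = c / 4 * Real.sqrt u := by
      field_simp
      nlinarith
    linarith [h1, h2.symm.le]
  have hzpos : (0:ℝ) ≤ z := le_trans (by positivity) hz1
  -- exp z ≥ c^4 u^2 / 65536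
  have hexp : c^4 * u^2 / 65536 ≤ Real.exp z := by
    have h1 := exp_ge_quartic z hzpos
    have h2 : (c/4 * Real.sqrt u)^4 ≤ z^4 := by
      apply pow_le_pow_left₀ (by positivity) hz1
    have hsq4 : (Real.sqrt u)^4 = u^2 := by
      rw [show (4:ℕ) = 2*2 from rfl, pow_mul, hsqu]
    have h3 : (c/4 * Real.sqrt u)^4 = c^4 * u^2 / 256 := by
      rw [mul_pow, hsq4]; ring
    nlinarith
  -- final
  have hfin : Real.log 2 + u * (A+1) ≤ c^4 * u^2 / 65536 * Real.log 2 := by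
    have hKpos : c^4 * u / 65536 ≥ 1 + (A+1)/Real.log 2 := by
      have : c^4 * K / 65536 = 1 + (A+1)/Real.log 2 := by
        rw [hK]; field_simp
      nlinarith [pow_pos hc 4]
    have : c^4 * u^2 / 65536 * Real.log 2 ≥ (1 + (A+1)/Real.log 2) * u * Real.log 2 := by
      nlinarith [mul_le_mul_of_nonneg_right hKpos (by positivity : (0:ℝ) ≤ u * Real.log 2)]
    have h2 : (1 + (A+1)/Real.log 2) * u * Real.log 2 = u * Real.log 2 + (A+1) * u := by
      field_simp
    nlinarith
  nlinarith [Real.exp_pos z]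



lemma event_N (c A : ℝ) (hc : 0 < c) (hA : 0 < A) :
    ∀ᶠ N : ℕ in atTop,
      (Real.log N) ^ (A:ℝ) ≤ Real.sqrt N ∧
      2 * (Real.log N) ^ ((A:ℝ)+1) ≤
        Real.exp (Real.exp (c * (Real.log (Real.log N) - Real.log 2) /
          Real.log (Real.log (Real.log N))) * Real.log 2) ∧ 3 ≤ N := by
  have hcast : Tendsto (fun N : ℕ => (N:ℝ)) atTop atTop := tendsto_natCast_atTop_atTop
  -- P1
  have hP1r : ∀ᶠ x : ℝ in atTop, (Real.log x) ^ (A:ℝ) ≤ Real.sqrt x := by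
    have hr : (0:ℝ) < 1/(2*A) := by positivity
    have h := ((isLittleO_log_rpow_atTop hr).def one_pos)
    filter_upwards [h, eventually_ge_atTop (3:ℝ)] with x hx h3
    have hxpos : (0:ℝ) < x := by linarith
    have hlogx : (0:ℝ) ≤ Real.log x := Real.log_nonneg (by linarith)
    rw [Real.norm_eq_abs, Real.norm_eq_abs, abs_of_nonneg hlogx,
      abs_of_nonneg (Real.rpow_nonneg (le_of_lt hxpos) _), one_mul] at hx
    have h2 : (Real.log x) ^ (A:ℝ) ≤ (x ^ (1/(2*A))) ^ (A:ℝ) :=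
      Real.rpow_le_rpow hlogx hx (le_of_lt hA)
    have h3' : (x ^ (1/(2*A))) ^ (A:ℝ) = x ^ ((1:ℝ)/2) := by
      rw [← Real.rpow_mul (le_of_lt hxpos)]
      congr 1
      field_simp
    rw [h3'] at h2
    rwa [Real.sqrt_eq_rpow]
  -- P2
  have hlogtend : Tendsto (fun N : ℕ => Real.log (Real.log N)) atTop atTop :=
    Real.tendsto_log_atTop.comp (Real.tendsto_log_atTop.comp hcast)
  have hP2 : ∀ᶠ N : ℕ in atTop,
      2 * (Real.log N) ^ ((A:ℝ)+1) ≤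
        Real.exp (Real.exp (c * (Real.log (Real.log N) - Real.log 2) /
          Real.log (Real.log (Real.log N))) * Real.log 2) := by
    filter_upwards [hlogtend.eventually (event_u c A hc hA), eventually_ge_atTop 3] with N hN h3
    have hN3 : (3:ℝ) ≤ (N:ℝ) := by exact_mod_cast h3
    have hlogN : (0:ℝ) < Real.log N := Real.log_pos (by linarith)
    have hrw : (Real.log N) ^ ((A:ℝ)+1) =
        Real.exp (Real.log (Real.log N) * ((A:ℝ)+1)) := by
      rw [Real.rpow_def_of_pos hlogN]
    rw [hrw]
    calc 2 * Real.exp (Real.log (Real.log N) * ((A:ℝ)+1))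
        = Real.exp (Real.log 2 + Real.log (Real.log N) * ((A:ℝ)+1)) := by
          rw [Real.exp_add, Real.exp_log (by norm_num : (0:ℝ) < 2)]
      _ ≤ Real.exp (Real.exp (c * (Real.log (Real.log N) - Real.log 2) /
            Real.log (Real.log (Real.log N))) * Real.log 2) :=
          Real.exp_le_exp.mpr hN
  filter_upwards [hcast.eventually hP1r, hP2, eventually_ge_atTop 3] with N h1 h2 h3
  exact ⟨h1, h2, h3⟩


lemma count_bound (c A : ℝ) (hc : 0 < c) (hA : 0 < A) :
    ∃ C : ℝ, 0 < C ∧ ∀ N : ℕ, 3 ≤ N →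
      (Set.ncard {k : ℕ | Real.exp (Real.exp (Real.exp (Real.exp 1))) ≤ (k : ℝ) ∧
          k ≤ N ∧
          Real.exp (c * Real.log (Real.log k) *
            Real.log (Real.log (Real.log (Real.log k))) /
            Real.log (Real.log (Real.log k))) < (k.primeFactors.card : ℝ)} : ℝ) ≤
        C * N / (Real.log N) ^ (A : ℝ) := by
  classical
  obtain ⟨N₀, hN₀⟩ := eventually_atTop.mp (event_N c A hc hA)
  refine ⟨2 + (Real.log (N₀ + 3 : ℕ)) ^ (A:ℝ), by positivity, ?_⟩
  set C := 2 + (Real.log (N₀ + 3 : ℕ)) ^ (A:ℝ) with hCdef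
  intro N hN3
  -- basic facts about log N
  have hN3R : (3:ℝ) ≤ (N:ℝ) := by exact_mod_cast hN3
  have hNpos : (0:ℝ) < (N:ℝ) := by linarith
  have he3 : Real.exp 1 < 3 := by
    have := Real.exp_one_lt_d9; linarith
  have hlog3 : (1:ℝ) < Real.log 3 := (Real.lt_log_iff_exp_lt (by norm_num)).mpr (by simpa using he3)
  have hlogN : (1:ℝ) < Real.log N := lt_of_lt_of_le hlog3 (Real.log_le_log (by norm_num) hN3R)
  have hpowpos : (0:ℝ) < (Real.log N) ^ (A:ℝ) := Real.rpow_pos_of_pos (by linarith) _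
  -- the bad set as a finset
  set E : ℝ := Real.exp (Real.exp (Real.exp (Real.exp 1))) with hEdef
  have hE1 : (1:ℝ) ≤ E := Real.one_le_exp (le_of_lt (Real.exp_pos _))
  set f : ℕ → ℝ := fun k => c * Real.log (Real.log k) *
      Real.log (Real.log (Real.log (Real.log k))) / Real.log (Real.log (Real.log k)) with hf
  set S : Finset ℕ := (Finset.Ioc 0 N).filter
    (fun k => E ≤ (k:ℝ) ∧ Real.exp (f k) < (k.primeFactors.card : ℝ)) with hS
  have hsetS : {k : ℕ | E ≤ (k : ℝ) ∧ k ≤ N ∧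
      Real.exp (f k) < (k.primeFactors.card : ℝ)} = ↑S := by
    ext k
    simp only [hS, Set.mem_setOf_eq, Finset.coe_filter, Finset.mem_Ioc]
    constructor
    · rintro ⟨h1, h2, h3⟩
      refine ⟨⟨?_, h2⟩, h1, h3⟩
      have : (1:ℝ) ≤ (k:ℝ) := le_trans hE1 h1
      exact_mod_cast lt_of_lt_of_le zero_lt_one (by exact_mod_cast this)
    · rintro ⟨⟨h0, h2⟩, h1, h3⟩
      exact ⟨h1, h2, h3⟩
  rw [hsetS, Set.ncard_coe_finset]
  -- case split on N₀ ≤ N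
  by_cases hbig : N₀ ≤ N
  · obtain ⟨hP1, hP2, -⟩ := hN₀ N hbig
    -- split S
    have hsplit := Finset.card_filter_add_card_filter_not
      (s := S) (p := fun k => Real.sqrt N < (k:ℝ))
    set S₂ : Finset ℕ := S.filter (fun k => Real.sqrt N < (k:ℝ)) with hS2
    set S₁ : Finset ℕ := S.filter (fun k => ¬ Real.sqrt N < (k:ℝ)) with hS1
    -- S₁ bound
    have hS1card : (S₁.card : ℝ) ≤ Real.sqrt N := by
      have hsub : S₁ ⊆ Finset.Ioc 0 (Nat.sqrt N) := by
        intro k hk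
        simp only [hS1, hS, Finset.mem_filter, Finset.mem_Ioc, not_lt] at hk
        obtain ⟨⟨⟨hk0, hkN⟩, -, -⟩, hksq⟩ := hk
        rw [Finset.mem_Ioc]
        refine ⟨hk0, ?_⟩
        have h1 : (k:ℝ)^2 ≤ (Real.sqrt N)^2 := by
          apply pow_le_pow_left₀ (Nat.cast_nonneg k) hksq
        rw [Real.sq_sqrt (le_of_lt hNpos)] at h1
        have h2 : k^2 ≤ N := by exact_mod_cast h1
        exact Nat.le_sqrt'.mpr h2
      have h1 : S₁.card ≤ Nat.sqrt N := by
        simpa using Finset.card_le_card hsub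
      have h2 : ((Nat.sqrt N : ℕ) : ℝ) ≤ Real.sqrt N := by
        rw [show ((Nat.sqrt N : ℕ) : ℝ) = Real.sqrt (((Nat.sqrt N : ℕ) : ℝ)^2) from
          (Real.sqrt_sq (Nat.cast_nonneg _)).symm]
        apply Real.sqrt_le_sqrt
        have h := Nat.sqrt_le' N
        have h' : ((Nat.sqrt N ^ 2 : ℕ) : ℝ) ≤ (N:ℝ) := by exact_mod_cast h
        push_cast at h'
        nlinarith
      calc (S₁.card : ℝ) ≤ (Nat.sqrt N : ℝ) := by exact_mod_cast h1
        _ ≤ Real.sqrt N := h2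
    -- S₂ Markov bound
    set T : ℝ := Real.exp (c * (Real.log (Real.log N) - Real.log 2) /
        Real.log (Real.log (Real.log N))) with hT
    have hmark : (S₂.card : ℝ) * Real.exp (T * Real.log 2) ≤ (N:ℝ) * (1 + Real.log N) := by
      have hptw : ∀ k ∈ S₂, Real.exp (T * Real.log 2) ≤ (k.divisors.card : ℝ) := by
        intro k hk
        simp only [hS2, hS, Finset.mem_filter, Finset.mem_Ioc] at hk
        obtain ⟨⟨⟨hk0, hkN⟩, hkE, hkw⟩, hksq⟩ := hk
        have hkNR : (k:ℝ) ≤ (N:ℝ) := by exact_mod_cast hkN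
        have hTf : T ≤ Real.exp (f k) :=
          Real.exp_le_exp.mpr (f_lower c (le_of_lt hc) N k hkE hksq hkNR)
        have hTω : T ≤ (k.primeFactors.card : ℝ) := le_trans hTf (le_of_lt hkw)
        have h1 : Real.exp (T * Real.log 2) ≤
            Real.exp ((k.primeFactors.card : ℝ) * Real.log 2) := by
          apply Real.exp_le_exp.mpr
          apply mul_le_mul_of_nonneg_right hTω (Real.log_nonneg (by norm_num))
        have h2 : Real.exp ((k.primeFactors.card : ℝ) * Real.log 2)
            = ((2 ^ k.primeFactors.card : ℕ) : ℝ) := by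
          rw [Real.exp_nat_mul, Real.exp_log (by norm_num : (0:ℝ) < 2)]
          push_cast; ring
        have h3 := two_pow_omega_le k (by omega)
        calc Real.exp (T * Real.log 2)
            ≤ ((2 ^ k.primeFactors.card : ℕ) : ℝ) := by rw [← h2]; exact h1
          _ ≤ (k.divisors.card : ℝ) := by exact_mod_cast h3
      calc (S₂.card : ℝ) * Real.exp (T * Real.log 2)
          = ∑ _k ∈ S₂, Real.exp (T * Real.log 2) := by
            rw [Finset.sum_const, nsmul_eq_mul]
        _ ≤ ∑ k ∈ S₂, (k.divisors.card : ℝ) := Finset.sum_le_sum hptw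
        _ ≤ ∑ k ∈ Finset.Ioc 0 N, (k.divisors.card : ℝ) := by
            apply Finset.sum_le_sum_of_subset_of_nonneg
            · exact subset_trans (Finset.filter_subset _ _) (Finset.filter_subset _ _)
            · intros; positivity
        _ ≤ (N:ℝ) * (1 + Real.log N) := sum_divisors_card_le N
    have hS2card : (S₂.card : ℝ) ≤ (N:ℝ) / (Real.log N) ^ (A:ℝ) := by
      have hW : 2 * (Real.log N) ^ ((A:ℝ)+1) ≤ Real.exp (T * Real.log 2) := hP2
      have hWpos : (0:ℝ) < 2 * (Real.log N) ^ ((A:ℝ)+1) := by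
        have := Real.rpow_pos_of_pos (show (0:ℝ) < Real.log N by linarith) ((A:ℝ)+1)
        linarith
      have h1 : (S₂.card : ℝ) * (2 * (Real.log N) ^ ((A:ℝ)+1)) ≤ 2 * ((N:ℝ) * Real.log N) := by
        have hcard0 : (0:ℝ) ≤ (S₂.card : ℝ) := Nat.cast_nonneg _
        have := mul_le_mul_of_nonneg_left hW hcard0
        have h2 : (N:ℝ) * (1 + Real.log N) ≤ 2 * ((N:ℝ) * Real.log N) := by nlinarith
        linarith [hmark]
      have hrw : (Real.log N) ^ ((A:ℝ)+1) = (Real.log N) ^ (A:ℝ) * Real.log N :=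
        Real.rpow_add_one (by linarith) _
      rw [hrw] at h1
      rw [le_div_iff₀ hpowpos]
      nlinarith [Nat.cast_nonneg (α := ℝ) S₂.card]
    -- assemble big case
    have hsqrtle : Real.sqrt N ≤ (N:ℝ) / (Real.log N) ^ (A:ℝ) := by
      rw [le_div_iff₀ hpowpos]
      have h0 : (0:ℝ) ≤ Real.sqrt N := Real.sqrt_nonneg _
      calc Real.sqrt N * (Real.log N) ^ (A:ℝ) ≤ Real.sqrt N * Real.sqrt N :=
            mul_le_mul_of_nonneg_left hP1 h0
        _ = (N:ℝ) := Real.mul_self_sqrt (le_of_lt hNpos)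
    have hcards : (S.card : ℝ) = (S₂.card : ℝ) + (S₁.card : ℝ) := by
      rw [← hsplit]; push_cast; ring
    have hCge2 : (2:ℝ) ≤ C := by
      rw [hCdef]
      have := Real.rpow_nonneg (Real.log_nonneg (by push_cast; linarith : (1:ℝ) ≤ ((N₀ + 3 : ℕ):ℝ))) (A:ℝ)
      linarith
    have hfrac : (0:ℝ) ≤ (N:ℝ) / (Real.log N) ^ (A:ℝ) := by positivity
    calc (S.card : ℝ) = (S₂.card : ℝ) + (S₁.card : ℝ) := hcards
      _ ≤ (N:ℝ) / (Real.log N) ^ (A:ℝ) + Real.sqrt N := by linarith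
      _ ≤ (N:ℝ) / (Real.log N) ^ (A:ℝ) + (N:ℝ) / (Real.log N) ^ (A:ℝ) := by linarith
      _ = 2 * ((N:ℝ) / (Real.log N) ^ (A:ℝ)) := by ring
      _ ≤ C * ((N:ℝ) / (Real.log N) ^ (A:ℝ)) := by nlinarith
      _ = C * (N:ℝ) / (Real.log N) ^ (A:ℝ) := by ring
  · -- small N
    have hcard : (S.card : ℝ) ≤ (N:ℝ) := by
      have h1 : S.card ≤ (Finset.Ioc 0 N).card := Finset.card_filter_le _ _
      have h2 : (Finset.Ioc 0 N).card = N := by simp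
      have := h1.trans_eq h2
      exact_mod_cast this
    have hlogle : (Real.log N) ^ (A:ℝ) ≤ C := by
      have h1 : Real.log N ≤ Real.log (N₀ + 3 : ℕ) := by
        apply Real.log_le_log hNpos
        push_cast
        have : N < N₀ := not_le.mp hbig
        have : (N:ℝ) < (N₀:ℝ) := by exact_mod_cast this
        linarith
      have h2 : (Real.log N) ^ (A:ℝ) ≤ (Real.log (N₀ + 3 : ℕ)) ^ (A:ℝ) :=
        Real.rpow_le_rpow (by linarith) h1 (le_of_lt hA)
      rw [hCdef]
      have : (0:ℝ) ≤ 2 := by norm_num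
      linarith
    calc (S.card : ℝ) ≤ (N:ℝ) := hcard
      _ ≤ C * (N:ℝ) / (Real.log N) ^ (A:ℝ) := by
        rw [le_div_iff₀ hpowpos]
        nlinarith


/-- For every `ε ∈ (0,1/2)` and `A > 0` there is `C` such that for all `N ≥ 3` the
number of integers `e^{e^{e^e}} ≤ k ≤ N` with more than
`exp((1/2-ε) log₂k log₄k / log₃k)` distinct prime factors is at most
`C·N/(log N)^A`.  In particular, the set of `k` with at most that many distinct
prime factors has natural density one. -/
theorem few_k_with_many_prime_factors :
    ∀ ε : ℝ, 0 < ε → ε < 1 / 2 →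
      (∀ A : ℝ, 0 < A → ∃ C : ℝ, 0 < C ∧ ∀ N : ℕ, 3 ≤ N →
        (Set.ncard {k : ℕ | Real.exp (Real.exp (Real.exp (Real.exp 1))) ≤ (k : ℝ) ∧
            k ≤ N ∧
            Real.exp ((1 / 2 - ε) * Real.log (Real.log k) *
              Real.log (Real.log (Real.log (Real.log k))) /
              Real.log (Real.log (Real.log k))) < (k.primeFactors.card : ℝ)} : ℝ) ≤
          C * N / (Real.log N) ^ (A : ℝ)) ∧
      Tendsto (fun N : ℕ =>
        (Set.ncard {k : ℕ | 1 ≤ k ∧ k ≤ N ∧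
            (k.primeFactors.card : ℝ) ≤
              Real.exp ((1 / 2 - ε) * Real.log (Real.log k) *
                Real.log (Real.log (Real.log (Real.log k))) /
                Real.log (Real.log (Real.log k)))} : ℝ) / (N : ℝ))
        atTop (nhds 1) := by
  intro ε hε hε2
  have hc : (0:ℝ) < 1/2 - ε := by linarith
  constructor
  · intro A hA
    exact count_bound (1/2 - ε) A hc hA
  · -- density one
    classical
    obtain ⟨C, hC, hb⟩ := count_bound (1/2 - ε) 1 hc one_pos
    set E : ℝ := Real.exp (Real.exp (Real.exp (Real.exp 1))) with hEdef
    have hE1 : (1:ℝ) ≤ E := Real.one_le_exp (le_of_lt (Real.exp_pos _))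
    set M : ℕ := ⌈E⌉₊ with hM
    set f : ℕ → ℝ := fun k => (1/2 - ε) * Real.log (Real.log k) *
        Real.log (Real.log (Real.log (Real.log k))) / Real.log (Real.log (Real.log k)) with hf
    set G : ℕ → Finset ℕ := fun N => (Finset.Ioc 0 N).filter
        (fun k => (k.primeFactors.card : ℝ) ≤ Real.exp (f k)) with hG
    have hGset : ∀ N : ℕ, {k : ℕ | 1 ≤ k ∧ k ≤ N ∧
        (k.primeFactors.card : ℝ) ≤ Real.exp (f k)} = ↑(G N) := by
      intro N
      ext k
      simp only [hG, Set.mem_setOf_eq, Finset.coe_filter, Finset.mem_Ioc]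
      constructor
      · rintro ⟨h1, h2, h3⟩; exact ⟨⟨h1, h2⟩, h3⟩
      · rintro ⟨⟨h1, h2⟩, h3⟩; exact ⟨h1, h2, h3⟩
    have hupper : ∀ N : ℕ, (G N).card ≤ N := by
      intro N
      calc (G N).card ≤ (Finset.Ioc 0 N).card := Finset.card_filter_le _ _
        _ = N := by simp
    have hlower : ∀ N : ℕ, 3 ≤ N →
        (N:ℝ) - M - C * N / Real.log N ≤ ((G N).card : ℝ) := by
      intro N hN3
      have hsplit := Finset.card_filter_add_card_filter_not
        (s := Finset.Ioc 0 N)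
        (p := fun k => (k.primeFactors.card : ℝ) ≤ Real.exp (f k))
      set B : Finset ℕ := (Finset.Ioc 0 N).filter
        (fun k => ¬ (k.primeFactors.card : ℝ) ≤ Real.exp (f k)) with hB
      have hsplit2 := Finset.card_filter_add_card_filter_not
        (s := B) (p := fun k => E ≤ (k:ℝ))
      set B₁ : Finset ℕ := B.filter (fun k => E ≤ (k:ℝ)) with hB1
      set B₂ : Finset ℕ := B.filter (fun k => ¬ E ≤ (k:ℝ)) with hB2
      -- B₁ is inside the bad set
      have hB1card : (B₁.card : ℝ) ≤ C * N / Real.log N := by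
        have hsub : ↑B₁ ⊆ {k : ℕ | E ≤ (k : ℝ) ∧ k ≤ N ∧
            Real.exp (f k) < (k.primeFactors.card : ℝ)} := by
          intro k hk
          simp only [hB1, hB, Finset.coe_filter, Finset.mem_filter, Finset.mem_Ioc,
            Set.mem_setOf_eq] at hk ⊢
          obtain ⟨⟨⟨hk0, hkN⟩, hknot⟩, hkE⟩ := hk
          exact ⟨hkE, hkN, not_le.mp hknot⟩
        have hfin : {k : ℕ | E ≤ (k : ℝ) ∧ k ≤ N ∧
            Real.exp (f k) < (k.primeFactors.card : ℝ)}.Finite := by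
          apply Set.Finite.subset (Finset.Ioc 0 N).finite_toSet
          intro k hk
          obtain ⟨h1, h2, -⟩ := hk
          simp only [Finset.coe_Ioc, Set.mem_Ioc]
          have : (1:ℝ) ≤ (k:ℝ) := le_trans hE1 h1
          exact ⟨by exact_mod_cast lt_of_lt_of_le zero_lt_one (by exact_mod_cast this), h2⟩
        have h1 : (B₁.card : ℝ) ≤ (Set.ncard {k : ℕ | E ≤ (k : ℝ) ∧ k ≤ N ∧
            Real.exp (f k) < (k.primeFactors.card : ℝ)} : ℝ) := by
          have := Set.ncard_le_ncard hsub hfin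
          rw [Set.ncard_coe_finset] at this
          exact_mod_cast this
        have h2 := hb N hN3
        rw [Real.rpow_one] at h2
        exact le_trans h1 h2
      have hB2card : (B₂.card : ℝ) ≤ (M : ℝ) := by
        have hsub : B₂ ⊆ Finset.Ioc 0 M := by
          intro k hk
          simp only [hB2, hB, Finset.mem_filter, Finset.mem_Ioc, not_le] at hk
          obtain ⟨⟨⟨hk0, hkN⟩, -⟩, hkE⟩ := hk
          rw [Finset.mem_Ioc]
          exact ⟨hk0, le_of_lt (Nat.lt_ceil.mpr hkE)⟩
        have h1 : B₂.card ≤ M := by simpa using Finset.card_le_card hsub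
        exact_mod_cast h1
      have hN : ((Finset.Ioc 0 N).card : ℝ) = (N:ℝ) := by simp
      have hcards : (N:ℝ) = ((G N).card : ℝ) + (B₁.card : ℝ) + (B₂.card : ℝ) := by
        rw [← hN, ← hsplit, ← hsplit2]
        push_cast
        ring
      linarith
    -- squeeze
    have hNtend : Tendsto (fun N : ℕ => (N:ℝ)) atTop atTop := tendsto_natCast_atTop_atTop
    have hlogtend : Tendsto (fun N : ℕ => Real.log N) atTop atTop :=
      Real.tendsto_log_atTop.comp hNtend
    have hg : Tendsto (fun N : ℕ => 1 - (M:ℝ)/N - C/Real.log N) atTop (nhds 1) := by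
      have h1 : Tendsto (fun N : ℕ => (M:ℝ)/N) atTop (nhds 0) :=
        tendsto_const_div_atTop_nhds_zero_nat _
      have h2 : Tendsto (fun N : ℕ => C/Real.log N) atTop (nhds 0) :=
        Tendsto.div_atTop tendsto_const_nhds hlogtend
      have := (tendsto_const_nhds (x := (1:ℝ)) (f := atTop (α := ℕ))).sub h1 |>.sub h2
      simpa using this
    have hmain : Tendsto (fun N : ℕ => ((G N).card : ℝ) / (N:ℝ)) atTop (nhds 1) := by
      apply tendsto_of_tendsto_of_tendsto_of_le_of_le' hg tendsto_const_nhds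
      · filter_upwards [eventually_ge_atTop 3] with N hN3
        have hNpos : (0:ℝ) < (N:ℝ) := by
          have : (3:ℝ) ≤ (N:ℝ) := by exact_mod_cast hN3
          linarith
        have hlogN : (0:ℝ) < Real.log N := by
          apply Real.log_pos
          have : (3:ℝ) ≤ (N:ℝ) := by exact_mod_cast hN3
          linarith
        have h1 := hlower N hN3
        have h2 : ((N:ℝ) - M - C * N / Real.log N) / N = 1 - (M:ℝ)/N - C/Real.log N := by
          field_simp
        rw [← h2]
        gcongr
      · filter_upwards [eventually_ge_atTop 1] with N hN1
        have hNpos : (0:ℝ) < (N:ℝ) := by exact_mod_cast hN1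
        rw [div_le_one hNpos]
        exact_mod_cast hupper N
    apply hmain.congr
    intro N
    rw [hGset N, Set.ncard_coe_finset]
end

section
/- Let k ≥ 3, N = φ(k), and m ≥ 1 be integers, and assume π_t + 2 ≤ N for all 1 ≤ t ≤ m. Then Ω is nonempty, and for every a ∈ {1,…,N}, P(E_a) = ∏_{t=1}^{m} (1 − 1/(N − π_t)), while for any two distinct a,b ∈ {1,…,N}, P(E_a ∩ E_b) = ∏_{t=1}^{m} (1 − 2/(N − π_t)). -/
open scoped Classical

/-- `π_t` (0-indexed): the number of indices `j < t` with `p_{t+1} - p_{j+1} < k`,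
where `p_1 < p_2 < ⋯` are the primes (so `Nat.nth Nat.Prime t` is `p_{t+1}`). -/
noncomputable def pit (k t : ℕ) : ℕ :=
  ((Finset.range t).filter
    (fun j : ℕ => Nat.nth Nat.Prime t - Nat.nth Nat.Prime j < k)).card

/-- The probability space `Ω = {x ∈ {1,…,N}^m : x_i ≠ x_j whenever i ≠ j and
|p_i - p_j| < k}` (indices 0-based, values in `Fin N`). -/
noncomputable def probSpace (k N m : ℕ) : Finset (Fin m → Fin N) :=
  Finset.univ.filter (fun x : Fin m → Fin N => ∀ i j : Fin m, i ≠ j →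
    |(Nat.nth Nat.Prime (i : ℕ) : ℤ) - (Nat.nth Nat.Prime (j : ℕ) : ℤ)| < (k : ℤ) →
    x i ≠ x j)

private lemma nth_prime_lt {i j : ℕ} (h : i < j) :
    Nat.nth Nat.Prime i < Nat.nth Nat.Prime j :=
  (Nat.nth_lt_nth Nat.infinite_setOf_prime).2 h

private lemma abs_nth_iff {k i j : ℕ} (hij : j < i) :
    (|(Nat.nth Nat.Prime i : ℤ) - (Nat.nth Nat.Prime j : ℤ)| < (k : ℤ)) ↔
      Nat.nth Nat.Prime i - Nat.nth Nat.Prime j < k := by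
  have h := nth_prime_lt hij
  rw [abs_of_nonneg (by simp only [sub_nonneg, Int.ofNat_le]; exact h.le)]
  omega

private lemma pit_eq_card (k m N : ℕ) :
    (Finset.univ.filter (fun j : Fin m =>
      Nat.nth Nat.Prime m - Nat.nth Nat.Prime (j : ℕ) < k)).card = pit k m := by
  rw [Finset.card_filter,
    Fin.sum_univ_eq_sum_range (fun j => if Nat.nth Nat.Prime m - Nat.nth Nat.Prime j < k then 1 else 0)]
  rw [pit, Finset.card_filter]

private lemma count_avoid (k N : ℕ) : ∀ (m : ℕ) (F : Finset (Fin N)),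
    (∀ t, t < m → pit k t + F.card ≤ N) →
    ((Finset.univ : Finset (Fin m → Fin N)).filter
      (fun x => (∀ i j : Fin m, i ≠ j →
        |(Nat.nth Nat.Prime (i : ℕ) : ℤ) - (Nat.nth Nat.Prime (j : ℕ) : ℤ)| < (k : ℤ) →
        x i ≠ x j) ∧ ∀ t, x t ∉ F)).card
      = ∏ t ∈ Finset.range m, (N - pit k t - F.card) := by
  intro m
  induction m with
  | zero =>
    intro F _
    simp [Finset.filter_true_of_mem, Finset.univ_unique]
  | succ m ih =>
    intro F hF
    set S := ((Finset.univ : Finset (Fin (m+1) → Fin N)).filter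
      (fun x => (∀ i j : Fin (m+1), i ≠ j →
        |(Nat.nth Nat.Prime (i : ℕ) : ℤ) - (Nat.nth Nat.Prime (j : ℕ) : ℤ)| < (k : ℤ) →
        x i ≠ x j) ∧ ∀ t, x t ∉ F)) with hS
    set T := ((Finset.univ : Finset (Fin m → Fin N)).filter
      (fun y => (∀ i j : Fin m, i ≠ j →
        |(Nat.nth Nat.Prime (i : ℕ) : ℤ) - (Nat.nth Nat.Prime (j : ℕ) : ℤ)| < (k : ℤ) →
        y i ≠ y j) ∧ ∀ t, y t ∉ F)) with hT
    have hmap : ∀ x ∈ S, Fin.init x ∈ T := by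
      intro x hx
      rw [hS, Finset.mem_filter] at hx
      rw [hT, Finset.mem_filter]
      refine ⟨Finset.mem_univ _, ?_, ?_⟩
      · intro i j hij habs
        have := hx.2.1 i.castSucc j.castSucc
          (by simpa [Fin.castSucc_inj] using hij) (by simpa using habs)
        simpa [Fin.init] using this
      · intro t
        simpa [Fin.init] using hx.2.2 t.castSucc
    have hfiber : ∀ y ∈ T,
        (S.filter (fun x => Fin.init x = y)).card = N - pit k m - F.card := by
      intro y hy
      rw [hT, Finset.mem_filter] at hy
      obtain ⟨-, hyv, hyF⟩ := hy
      set W : Finset (Fin m) := Finset.univ.filter (fun j : Fin m =>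
        Nat.nth Nat.Prime m - Nat.nth Nat.Prime (j : ℕ) < k) with hW
      set A : Finset (Fin N) := (F ∪ W.image y)ᶜ with hA
      have hmemA : ∀ z : Fin N, z ∈ A ↔ z ∉ F ∧ ∀ j : Fin m,
          Nat.nth Nat.Prime m - Nat.nth Nat.Prime (j : ℕ) < k → z ≠ y j := by
        intro z
        simp only [hA, Finset.mem_compl, Finset.mem_union, not_or, Finset.mem_image, hW,
          Finset.mem_filter, Finset.mem_univ, true_and, not_exists, not_and]
        constructor
        · rintro ⟨h1, h2⟩; exact ⟨h1, fun j hj hzy => h2 j hj hzy.symm⟩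
        · rintro ⟨h1, h2⟩; exact ⟨h1, fun j hj hzy => h2 j hj hzy.symm⟩
      have hdisj : Disjoint F (W.image y) := by
        rw [Finset.disjoint_right]
        intro z hz
        rw [Finset.mem_image] at hz
        obtain ⟨j, -, rfl⟩ := hz
        exact hyF j
      have hinj : Set.InjOn y W := by
        intro j hj j' hj' heq
        by_contra hne
        rw [hW, Finset.coe_filter] at hj hj'
        have h1 : Nat.nth Nat.Prime (j : ℕ) < Nat.nth Nat.Prime m := nth_prime_lt j.isLt
        have h2 : Nat.nth Nat.Prime (j' : ℕ) < Nat.nth Nat.Prime m := nth_prime_lt j'.isLt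
        refine hyv j j' (fun h => hne h) ?_ heq
        rw [abs_lt]
        have hj3 := hj.2
        have hj4 := hj'.2
        constructor <;> omega
      have hAcard : A.card = N - pit k m - F.card := by
        rw [hA, Finset.card_compl, Finset.card_union_of_disjoint hdisj,
          Finset.card_image_of_injOn hinj, hW, pit_eq_card k m N, Fintype.card_fin]
        omega
      rw [← hAcard]
      have hmemS : ∀ x : Fin (m+1) → Fin N, x ∈ S ↔
          ((∀ i j : Fin (m+1), i ≠ j →
            |(Nat.nth Nat.Prime (i : ℕ) : ℤ) - (Nat.nth Nat.Prime (j : ℕ) : ℤ)| < (k : ℤ) →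
            x i ≠ x j) ∧ ∀ t, x t ∉ F) := by
        intro x; rw [hS, Finset.mem_filter]; simp
      refine Finset.card_bij' (fun x _ => x (Fin.last m)) (fun z _ => Fin.snoc y z) ?_ ?_ ?_ ?_
      · -- hi
        intro x hx
        rw [Finset.mem_filter] at hx
        obtain ⟨hxS, hxinit⟩ := hx
        rw [hmemS] at hxS
        rw [hmemA]
        refine ⟨hxS.2 _, ?_⟩
        intro j hj
        have habs : |(Nat.nth Nat.Prime ((Fin.last m : Fin (m+1)) : ℕ) : ℤ) -
            (Nat.nth Nat.Prime ((j.castSucc : Fin (m+1)) : ℕ) : ℤ)| < (k : ℤ) := by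
          simpa using (abs_nth_iff j.isLt).2 hj
        have := hxS.1 (Fin.last m) j.castSucc (Fin.castSucc_lt_last j).ne' habs
        rwa [show x j.castSucc = y j by rw [← hxinit]; rfl] at this
      · -- hj
        intro z hz
        rw [hmemA] at hz
        rw [Finset.mem_filter, hmemS]
        refine ⟨⟨?_, ?_⟩, Fin.init_snoc _ _⟩
        · intro i j hij habs
          induction i using Fin.lastCases with
          | last =>
            induction j using Fin.lastCases with
            | last => exact absurd rfl hij
            | cast j =>
              simp only [Fin.snoc_last, Fin.snoc_castSucc]
              exact hz.2 j ((abs_nth_iff j.isLt).1 (by simpa using habs))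
          | cast i =>
            induction j using Fin.lastCases with
            | last =>
              simp only [Fin.snoc_last, Fin.snoc_castSucc]
              refine (hz.2 i ((abs_nth_iff i.isLt).1 ?_)).symm
              rw [abs_sub_comm] at habs
              simpa using habs
            | cast j =>
              simp only [Fin.snoc_castSucc]
              exact hyv i j (by simpa [Fin.castSucc_inj] using hij) (by simpa using habs)
        · intro t
          induction t using Fin.lastCases with
          | last => simp only [Fin.snoc_last]; exact hz.1
          | cast t => simp only [Fin.snoc_castSucc]; exact hyF t
      · -- left inverse
        intro x hx
        rw [Finset.mem_filter] at hx
        beta_reduce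
        rw [← hx.2]
        exact Fin.snoc_init_self x
      · -- right inverse
        intro z _
        beta_reduce
        exact Fin.snoc_last _ _
    rw [Finset.card_eq_sum_card_fiberwise hmap, Finset.sum_congr rfl hfiber,
      Finset.sum_const, smul_eq_mul, ih F (fun t ht => hF t (by omega)),
      Finset.prod_range_succ, mul_comm]

/-- Let `k ≥ 3`, `N = φ(k)`, `m ≥ 1`, and assume `π_t + 2 ≤ N` for all `1 ≤ t ≤ m`.
Then `Ω ≠ ∅`, and for every `a`, `P(E_a) = ∏_{t=1}^m (1 - 1/(N - π_t))`, while for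
distinct `a ≠ b`, `P(E_a ∩ E_b) = ∏_{t=1}^m (1 - 2/(N - π_t))`.  Here `E_a` is the
event that no coordinate equals `a`, and `P` is the uniform measure on `Ω`. -/
theorem coupon_probabilities (k N m : ℕ) (hk : 3 ≤ k) (hN : N = Nat.totient k)
    (hm : 1 ≤ m) (hpi : ∀ t : ℕ, t < m → pit k t + 2 ≤ N) :
    (probSpace k N m).Nonempty ∧
    (∀ a : Fin N,
      (((probSpace k N m).filter (fun x => ∀ t : Fin m, x t ≠ a)).card : ℝ) /
          ((probSpace k N m).card : ℝ) =
        ∏ t ∈ Finset.range m, (1 - 1 / ((N : ℝ) - (pit k t : ℝ)))) ∧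
    (∀ a b : Fin N, a ≠ b →
      (((probSpace k N m).filter
          (fun x => (∀ t : Fin m, x t ≠ a) ∧ (∀ t : Fin m, x t ≠ b))).card : ℝ) /
          ((probSpace k N m).card : ℝ) =
        ∏ t ∈ Finset.range m, (1 - 2 / ((N : ℝ) - (pit k t : ℝ)))) := by
  have key : ∀ F : Finset (Fin N), F.card ≤ 2 →
      ((probSpace k N m).filter (fun x => ∀ t : Fin m, x t ∉ F)).card
        = ∏ t ∈ Finset.range m, (N - pit k t - F.card) := by
    intro F hF2
    rw [show (probSpace k N m).filter (fun x => ∀ t : Fin m, x t ∉ F)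
        = (Finset.univ : Finset (Fin m → Fin N)).filter
          (fun x => (∀ i j : Fin m, i ≠ j →
            |(Nat.nth Nat.Prime (i : ℕ) : ℤ) - (Nat.nth Nat.Prime (j : ℕ) : ℤ)| < (k : ℤ) →
            x i ≠ x j) ∧ ∀ t, x t ∉ F) from by
      ext x
      simp [probSpace, Finset.mem_filter, and_assoc]]
    exact count_avoid k N m F (fun t ht => by have := hpi t ht; omega)
  have hΩ : (probSpace k N m).card = ∏ t ∈ Finset.range m, (N - pit k t) := by
    have h0 := key ∅ (by simp)
    rw [Finset.filter_true_of_mem (fun x _ => by simp)] at h0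
    simpa using h0
  have hΩpos : 0 < (probSpace k N m).card := by
    rw [hΩ]
    exact Finset.prod_pos (fun t ht => by
      have := hpi t (Finset.mem_range.1 ht); omega)
  have hratio : ∀ c : ℕ, c ≤ 2 →
      (((∏ t ∈ Finset.range m, (N - pit k t - c) : ℕ)) : ℝ) /
        (((∏ t ∈ Finset.range m, (N - pit k t) : ℕ)) : ℝ)
        = ∏ t ∈ Finset.range m, (1 - (c : ℝ) / ((N : ℝ) - (pit k t : ℝ))) := by
    intro c hc
    rw [Nat.cast_prod, Nat.cast_prod, ← Finset.prod_div_distrib]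
    refine Finset.prod_congr rfl (fun t ht => ?_)
    have h2 := hpi t (Finset.mem_range.1 ht)
    rw [Nat.cast_sub (by omega), Nat.cast_sub (by omega)]
    have hd : ((N : ℝ) - (pit k t : ℝ)) ≠ 0 := by
      have : (pit k t : ℝ) + 2 ≤ (N : ℝ) := by exact_mod_cast h2
      nlinarith
    field_simp
  refine ⟨Finset.card_pos.1 hΩpos, ?_, ?_⟩
  · intro a
    have hc : ((probSpace k N m).filter (fun x => ∀ t : Fin m, x t ≠ a)).card
        = ∏ t ∈ Finset.range m, (N - pit k t - 1) := by
      rw [Finset.filter_congr (fun x _ => show (∀ t : Fin m, x t ≠ a) ↔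
        (∀ t : Fin m, x t ∉ ({a} : Finset (Fin N))) by simp)]
      simpa using key {a} (by simp)
    rw [hc, hΩ]
    simpa using hratio 1 (by norm_num)
  · intro a b hab
    have hc : ((probSpace k N m).filter
        (fun x => (∀ t : Fin m, x t ≠ a) ∧ (∀ t : Fin m, x t ≠ b))).card
        = ∏ t ∈ Finset.range m, (N - pit k t - 2) := by
      rw [Finset.filter_congr (fun x _ =>
        show ((∀ t : Fin m, x t ≠ a) ∧ (∀ t : Fin m, x t ≠ b)) ↔
          (∀ t : Fin m, x t ∉ ({a, b} : Finset (Fin N))) by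
        simp [forall_and])]
      have := key {a, b} (by rw [Finset.card_pair hab])
      rwa [Finset.card_pair hab] at this
    rw [hc, hΩ]
    simpa using hratio 2 (le_refl 2)
end

section
/- Let k ≥ 3, N = φ(k), and m ≥ 1 be integers, and assume π_t + 2 ≤ N for all 1 ≤ t ≤ m. Then the complements E_a^c (a = 1,…,N) are negatively correlated: P(E_1^c ∩ E_2^c ∩ … ∩ E_N^c) ≤ P(E_1^c)·P(E_2^c)···P(E_N^c). -/
open scoped Classical

namespace CNC
open Finset

/-- adjacency of indices -/
def adj (k i j : ℕ) : Prop :=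
  |(Nat.nth Nat.Prime i : ℤ) - (Nat.nth Nat.Prime j : ℤ)| < (k : ℤ)

lemma nth_mono : StrictMono (Nat.nth Nat.Prime) := fun _ _ h =>
  (Nat.nth_lt_nth Nat.infinite_setOf_prime).2 h

lemma adj_symm {k i j : ℕ} (h : adj k i j) : adj k j i := by
  unfold adj at *; rwa [abs_sub_comm]

lemma adj_lt_iff {k j t : ℕ} (hjt : j < t) :
    adj k j t ↔ ((Nat.nth Nat.Prime t : ℤ) - (Nat.nth Nat.Prime j : ℤ)) < (k : ℤ) := by
  unfold adj
  rw [abs_sub_comm, abs_of_nonneg]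
  exact sub_nonneg.2 (by exact_mod_cast (nth_mono hjt).le)

/-- if j < j' ≤ t and j ~ t then j ~ j' -/
lemma adj_of_between {k j j' t : ℕ} (h1 : j < j') (h2 : j' ≤ t) (h : adj k j t) :
    adj k j j' := by
  rw [adj_lt_iff (lt_of_lt_of_le h1 h2)] at h
  rw [adj_lt_iff h1]
  have := nth_mono (lt_of_lt_of_le h1 h2 : j < t)
  have h2' : Nat.nth Nat.Prime j' ≤ Nat.nth Nat.Prime t := (nth_mono.le_iff_le).2 h2
  have : (Nat.nth Nat.Prime j' : ℤ) ≤ (Nat.nth Nat.Prime t : ℤ) := by exact_mod_cast h2'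
  linarith

/-- if j < j' < t and j ~ t then j' ~ t -/
lemma adj_of_between' {k j j' t : ℕ} (h1 : j < j') (h2 : j' < t) (h : adj k j t) :
    adj k j' t := by
  rw [adj_lt_iff (h1.trans h2)] at h
  rw [adj_lt_iff h2]
  have h1' : Nat.nth Nat.Prime j ≤ Nat.nth Nat.Prime j' := (nth_mono.le_iff_le).2 h1.le
  have : (Nat.nth Nat.Prime j : ℤ) ≤ (Nat.nth Nat.Prime j' : ℤ) := by exact_mod_cast h1'
  linarith

lemma mem_probSpace {k N m : ℕ} {x : Fin m → Fin N} :
    x ∈ probSpace k N m ↔ ∀ i j : Fin m, i ≠ j → adj k i j → x i ≠ x j := by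
  simp only [probSpace, mem_filter, mem_univ, true_and]; rfl

/-- the window of index m inside Fin m -/
noncomputable def wdw (k m : ℕ) : Finset (Fin m) :=
  univ.filter (fun j : Fin m => adj k (j : ℕ) m)

lemma card_wdw (k m : ℕ) : (wdw k m).card = pit k m := by
  unfold wdw pit
  apply card_bij (fun (j : Fin m) _ => (j : ℕ))
  · intro a ha
    simp only [mem_filter, mem_univ, true_and] at ha ⊢
    rw [mem_range]
    refine ⟨a.isLt, ?_⟩
    rw [adj_lt_iff a.isLt] at ha
    have hle : Nat.nth Nat.Prime a ≤ Nat.nth Nat.Prime m := (nth_mono (a.isLt)).le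
    omega
  · intro a _ b _ hab
    exact Fin.ext hab
  · intro b hb
    simp only [mem_filter, mem_range] at hb
    refine ⟨⟨b, hb.1⟩, ?_, rfl⟩
    simp only [mem_filter, mem_univ, true_and]
    rw [adj_lt_iff hb.1]
    have hle : Nat.nth Nat.Prime b ≤ Nat.nth Nat.Prime m := (nth_mono hb.1).le
    have h2 := hb.2
    omega


lemma init_mem {k N m : ℕ} {x : Fin (m+1) → Fin N} (hx : x ∈ probSpace k N (m+1)) :
    Fin.init x ∈ probSpace k N m := by
  rw [mem_probSpace] at *
  intro i j hij hadj
  have := hx i.castSucc j.castSucc (by simpa using hij) (by simpa using hadj)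
  simpa [Fin.init] using this

lemma snoc_mem_iff {k N m : ℕ} {y : Fin m → Fin N} {c : Fin N} :
    Fin.snoc y c ∈ probSpace k N (m+1) ↔
      y ∈ probSpace k N m ∧ ∀ j : Fin m, adj k (j : ℕ) m → c ≠ y j := by
  constructor
  · intro h
    refine ⟨by simpa [Fin.init_snoc] using init_mem h, ?_⟩
    rw [mem_probSpace] at h
    intro j hadj
    have hne : (Fin.last m) ≠ j.castSucc := by
      intro he
      have : (m : ℕ) = (j : ℕ) := by
        simpa using congrArg (Fin.val) he
      omega
    have := h (Fin.last m) j.castSucc hne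
      (by simpa using adj_symm hadj)
    simpa [Fin.snoc_last, Fin.snoc_castSucc] using this
  · rintro ⟨hy, hc⟩
    rw [mem_probSpace] at *
    intro i j hij hadj
    induction i using Fin.lastCases with
    | last =>
      induction j using Fin.lastCases with
      | last => exact absurd rfl hij
      | cast j =>
        simp only [Fin.snoc_last, Fin.snoc_castSucc]
        exact hc j (by simpa using adj_symm hadj)
    | cast i =>
      induction j using Fin.lastCases with
      | last =>
        simp only [Fin.snoc_last, Fin.snoc_castSucc]
        exact fun he => (hc i (by simpa using hadj)) he.symm
      | cast j =>
        simp only [Fin.snoc_castSucc]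
        exact hy i j (by simpa using hij) (by simpa using hadj)

/-- counting over probSpace (m+1) by fibers over the initial segment -/
lemma card_filter_snoc {k N m : ℕ} (Q : (Fin (m+1) → Fin N) → Prop) :
    ((probSpace k N (m+1)).filter Q).card =
      ∑ y ∈ probSpace k N m,
        (univ.filter (fun c : Fin N =>
          (∀ j : Fin m, adj k (j : ℕ) m → c ≠ y j) ∧ Q (Fin.snoc y c))).card := by
  rw [Finset.card_eq_sum_card_fiberwise
    (f := fun x => Fin.init x) (t := probSpace k N m)
    (fun x hx => init_mem (mem_filter.1 hx).1)]
  refine Finset.sum_congr rfl (fun y hy => ?_)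
  refine Finset.card_bij' (fun x _ => x (Fin.last m)) (fun c _ => Fin.snoc y c)
    ?_ ?_ ?_ ?_
  · intro x hx
    have hinit := (Finset.mem_filter.1 hx).2
    have hQx := (Finset.mem_filter.1 (Finset.mem_filter.1 hx).1).2
    have hmem := (Finset.mem_filter.1 (Finset.mem_filter.1 hx).1).1
    have hxx : Fin.snoc y (x (Fin.last m)) = x := by
      rw [← hinit]; exact Fin.snoc_init_self x
    rw [Finset.mem_filter]
    refine ⟨Finset.mem_univ _, ?_, ?_⟩
    · exact (snoc_mem_iff.1 (by rwa [hxx])).2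
    · rwa [hxx]
  · intro c hc
    have h1 := (Finset.mem_filter.1 hc).2.1
    have h2 := (Finset.mem_filter.1 hc).2.2
    rw [Finset.mem_filter, Finset.mem_filter]
    exact ⟨⟨snoc_mem_iff.2 ⟨hy, h1⟩, h2⟩, Fin.init_snoc _ _⟩
  · intro x hx
    have hinit := (Finset.mem_filter.1 hx).2
    show Fin.snoc y (x (Fin.last m)) = x
    rw [← hinit]; exact Fin.snoc_init_self x
  · intro c _
    simp

/-- the set of colors allowed for the next coordinate after `y` -/
noncomputable def aset (k N m : ℕ) (y : Fin m → Fin N) : Finset (Fin N) :=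
  univ.filter (fun c : Fin N => ∀ j : Fin m, adj k (j : ℕ) m → c ≠ y j)

/-- colors of `S` missed by `x` -/
noncomputable def missSet {N : ℕ} (S : Finset (Fin N)) {m : ℕ} (x : Fin m → Fin N) :
    Finset (Fin N) :=
  S.filter (fun a => ∀ t, x t ≠ a)

/-- main counting quantity: proper colorings avoiding `banned` with at most `r`
missing colors from `S` -/
noncomputable def Gc (k N : ℕ) (banned S : Finset (Fin N)) (r m : ℕ) : ℕ :=
  ((probSpace k N m).filter
    (fun x => (∀ t, x t ∉ banned) ∧ (missSet S x).card ≤ r)).card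

lemma wdw_injOn {k N m : ℕ} {y : Fin m → Fin N} (hy : y ∈ probSpace k N m) :
    Set.InjOn y (wdw k m) := by
  intro j hj j' hj' he
  by_contra hne
  simp only [wdw, coe_filter, Set.mem_setOf_eq] at hj hj'
  have hvne : (j : ℕ) ≠ (j' : ℕ) := fun h => hne (Fin.ext h)
  rcases lt_or_gt_of_ne hvne with h | h
  · exact mem_probSpace.1 hy j j' hne (adj_of_between h (le_of_lt j'.isLt) hj.2) he
  · exact mem_probSpace.1 hy j' j (Ne.symm hne)
      (adj_of_between h (le_of_lt j.isLt) hj'.2) he.symm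

lemma aset_eq {k N m : ℕ} (y : Fin m → Fin N) :
    aset k N m y = univ \ (wdw k m).image y := by
  ext c
  simp only [aset, wdw, mem_filter, mem_univ, true_and, mem_sdiff, mem_image, not_exists,
    not_and]
  constructor
  · intro h j hj he
    exact (h j hj) he.symm
  · intro h j hj he
    exact (h j) hj he.symm

lemma card_aset {k N m : ℕ} {y : Fin m → Fin N} (hy : y ∈ probSpace k N m) :
    (aset k N m y).card = N - pit k m := by
  rw [aset_eq, card_sdiff_of_subset (subset_univ _), card_image_of_injOn (wdw_injOn hy),
    card_wdw, card_univ, Fintype.card_fin]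

lemma banned_subset_aset {k N m : ℕ} {y : Fin m → Fin N} {banned : Finset (Fin N)}
    (hav : ∀ t, y t ∉ banned) : banned ⊆ aset k N m y := by
  intro a ha
  simp only [aset, mem_filter, mem_univ, true_and]
  intro j _ he
  exact hav j (he ▸ ha)

lemma missSet_subset_aset {k N m : ℕ} {y : Fin m → Fin N} {S : Finset (Fin N)} :
    missSet S y ⊆ aset k N m y := by
  intro a ha
  simp only [missSet, mem_filter] at ha
  simp only [aset, mem_filter, mem_univ, true_and]
  intro j _ he
  exact ha.2 j he.symm

lemma forall_snoc {N m : ℕ} (y : Fin m → Fin N) (c : Fin N) (P : Fin N → Prop) :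
    (∀ t : Fin (m+1), P (Fin.snoc (α := fun _ => Fin N) y c t)) ↔
      (∀ t : Fin m, P (y t)) ∧ P c := by
  constructor
  · intro h
    refine ⟨fun t => ?_, ?_⟩
    · have := h t.castSucc; rwa [Fin.snoc_castSucc] at this
    · have := h (Fin.last m); rwa [Fin.snoc_last] at this
  · rintro ⟨h1, h2⟩ t
    rcases Fin.eq_castSucc_or_eq_last t with ⟨i, rfl⟩ | rfl
    · rw [Fin.snoc_castSucc]; exact h1 i
    · rwa [Fin.snoc_last]

lemma missSet_snoc {N m : ℕ} (S : Finset (Fin N)) (y : Fin m → Fin N) (c : Fin N) :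
    missSet S (Fin.snoc y c) = (missSet S y).erase c := by
  ext a
  simp only [missSet, mem_filter, mem_erase]
  rw [forall_snoc y c (fun v => v ≠ a)]
  constructor
  · rintro ⟨hS, h1, h2⟩
    exact ⟨fun he => h2 he.symm, hS, h1⟩
  · rintro ⟨hca, hS, h1⟩
    exact ⟨hS, h1, fun he => hca he.symm⟩

lemma Gc_split {k N : ℕ} (banned S : Finset (Fin N)) (r m : ℕ) :
    Gc k N banned S (r+1) m = Gc k N banned S r m +
      ((probSpace k N m).filter
        (fun y => (∀ t, y t ∉ banned) ∧ (missSet S y).card = r+1)).card := by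
  unfold Gc
  rw [← Finset.card_filter_add_card_filter_not
      (s := (probSpace k N m).filter
        (fun x => (∀ t, x t ∉ banned) ∧ (missSet S x).card ≤ r+1))
      (p := fun y => (missSet S y).card ≤ r)]
  congr 1
  · refine congrArg Finset.card ?_
    rw [Finset.filter_filter]
    apply Finset.filter_congr
    intro y _
    constructor
    · rintro ⟨⟨h1, _⟩, h3⟩; exact ⟨h1, h3⟩
    · rintro ⟨h1, h3⟩; exact ⟨⟨h1, by omega⟩, h3⟩
  · refine congrArg Finset.card ?_
    rw [Finset.filter_filter]
    apply Finset.filter_congr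
    intro y _
    constructor
    · rintro ⟨⟨h1, h2⟩, h3⟩; exact ⟨h1, by omega⟩
    · rintro ⟨h1, h3⟩; exact ⟨⟨h1, by omega⟩, by omega⟩

lemma inner_eval {k N m : ℕ} {banned S : Finset (Fin N)} (hSb : ∀ a ∈ S, a ∉ banned)
    (r : ℕ) {y : Fin m → Fin N} (hy : y ∈ probSpace k N m) :
    (univ.filter (fun c : Fin N =>
      (∀ j : Fin m, adj k (j : ℕ) m → c ≠ y j) ∧
      (∀ t : Fin (m+1), Fin.snoc (α := fun _ => Fin N) y c t ∉ banned) ∧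
      (missSet S (Fin.snoc (α := fun _ => Fin N) y c)).card ≤ r)).card
    = (if (∀ t, y t ∉ banned) ∧ (missSet S y).card ≤ r
        then (N - pit k m - banned.card) else 0)
      + (if (∀ t, y t ∉ banned) ∧ (missSet S y).card = r+1 then r+1 else 0) := by
  by_cases hav : ∀ t, y t ∉ banned
  case neg =>
    rw [if_neg (fun h => hav h.1), if_neg (fun h => hav h.1)]
    rw [Finset.card_eq_zero, Finset.filter_eq_empty_iff]
    rintro c - ⟨-, h2, -⟩
    exact hav (fun t => ((forall_snoc y c (fun v => v ∉ banned)).1 h2).1 t)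
  case pos =>
    have hset : (univ.filter (fun c : Fin N =>
        (∀ j : Fin m, adj k (j : ℕ) m → c ≠ y j) ∧
        (∀ t : Fin (m+1), Fin.snoc (α := fun _ => Fin N) y c t ∉ banned) ∧
        (missSet S (Fin.snoc (α := fun _ => Fin N) y c)).card ≤ r)) =
        (aset k N m y \ banned).filter
          (fun c => ((missSet S y).erase c).card ≤ r) := by
      ext c
      simp only [mem_filter, mem_univ, true_and, mem_sdiff, aset, missSet_snoc]
      rw [forall_snoc y c (fun v => v ∉ banned)]
      tauto
    rw [hset]
    rcases lt_trichotomy ((missSet S y).card) (r+1) with hc | hc | hc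
    · -- μ ≤ r : all allowed colors work
      rw [if_pos ⟨hav, by omega⟩, if_neg (fun h => by omega)]
      rw [Finset.filter_true_of_mem (fun c _ =>
        le_trans (card_le_card (erase_subset _ _)) (by omega))]
      rw [card_sdiff_of_subset (banned_subset_aset hav), card_aset hy]
      omega
    · -- μ = r+1 : exactly the missing colors work
      rw [if_neg (fun h => by omega), if_pos ⟨hav, hc⟩]
      have : (aset k N m y \ banned).filter
          (fun c => ((missSet S y).erase c).card ≤ r) = missSet S y := by
        ext c
        simp only [mem_filter, mem_sdiff]
        constructor
        · rintro ⟨⟨h1, h2⟩, h3⟩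
          by_contra hcm
          rw [Finset.erase_eq_of_notMem hcm] at h3
          omega
        · intro hcm
          refine ⟨⟨missSet_subset_aset hcm, hSb c (Finset.mem_filter.1 hcm).1⟩, ?_⟩
          rw [Finset.card_erase_of_mem hcm]
          omega
      rw [this, hc]
      omega
    · -- μ > r+1 : nothing works
      rw [if_neg (fun h => by omega), if_neg (fun h => by omega)]
      rw [Finset.card_eq_zero, Finset.filter_eq_empty_iff]
      intro c _
      by_cases hcm : c ∈ missSet S y
      · rw [Finset.card_erase_of_mem hcm]; omega
      · rw [Finset.erase_eq_of_notMem hcm]; omega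

lemma sum_ite_const {α : Type*} (s : Finset α) (P : α → Prop) [DecidablePred P] (C : ℕ) :
    (∑ y ∈ s, if P y then C else 0) = (s.filter P).card * C := by
  rw [← Finset.sum_filter, Finset.sum_const, smul_eq_mul]

lemma card_filter_ext {α : Type*} {s : Finset α} {p q : α → Prop}
    {i1 : DecidablePred p} {i2 : DecidablePred q} (h : ∀ a, p a ↔ q a) :
    (@Finset.filter _ p i1 s).card = (@Finset.filter _ q i2 s).card :=
  congrArg Finset.card (@Finset.filter_congr _ _ _ i1 i2 s (fun a _ => h a))

lemma Gc_rec {k N m : ℕ} {banned S : Finset (Fin N)} (hSb : ∀ a ∈ S, a ∉ banned) (r : ℕ) :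
    Gc k N banned S r (m+1) + (r+1) * Gc k N banned S r m
      = (N - pit k m - banned.card) * Gc k N banned S r m
        + (r+1) * Gc k N banned S (r+1) m := by
  have h1 : Gc k N banned S r (m+1)
      = ∑ y ∈ probSpace k N m,
          (univ.filter (fun c : Fin N =>
            (∀ j : Fin m, adj k (j : ℕ) m → c ≠ y j) ∧
            (∀ t : Fin (m+1), Fin.snoc (α := fun _ => Fin N) y c t ∉ banned) ∧
            (missSet S (Fin.snoc (α := fun _ => Fin N) y c)).card ≤ r)).card := by
    unfold Gc
    refine Eq.trans (Eq.trans ?_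
      (card_filter_snoc (k := k) (N := N) (m := m)
        (fun x => (∀ t, x t ∉ banned) ∧ (missSet S x).card ≤ r))) ?_
    · exact card_filter_ext (fun _ => Iff.rfl)
    · exact Finset.sum_congr rfl (fun y _ => card_filter_ext (fun _ => Iff.rfl))
  rw [h1, Finset.sum_congr rfl (fun y hy => inner_eval hSb r hy),
    Finset.sum_add_distrib]
  rw [sum_ite_const (probSpace k N m)
      (fun y => (∀ t, y t ∉ banned) ∧ (missSet S y).card ≤ r) (N - pit k m - banned.card),
    sum_ite_const (probSpace k N m)
      (fun y => (∀ t, y t ∉ banned) ∧ (missSet S y).card = r+1) (r+1)]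
  rw [show ((probSpace k N m).filter
      (fun y => (∀ t, y t ∉ banned) ∧ (missSet S y).card ≤ r)).card
      = Gc k N banned S r m from card_filter_ext (fun _ => Iff.rfl)]
  rw [Gc_split banned S r m]
  ring

lemma card_filter_ext_mem {α : Type*} {s : Finset α} {p q : α → Prop}
    {i1 : DecidablePred p} {i2 : DecidablePred q} (h : ∀ a ∈ s, p a ↔ q a) :
    (@Finset.filter _ p i1 s).card = (@Finset.filter _ q i2 s).card :=
  congrArg Finset.card (@Finset.filter_congr _ _ _ i1 i2 s h)

lemma missSet_empty {N m : ℕ} (x : Fin m → Fin N) :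
    missSet (∅ : Finset (Fin N)) x = ∅ := by
  simp [missSet]

lemma Gc_banned_empty_eq {k N m : ℕ} (banned : Finset (Fin N)) (r : ℕ) :
    Gc k N banned ∅ r m = Gc k N banned ∅ 0 m := by
  unfold Gc
  exact card_filter_ext (fun x => by simp [missSet_empty])

lemma Gc_le_total {k N m : ℕ} (S : Finset (Fin N)) (r : ℕ) :
    Gc k N ∅ S r m ≤ Gc k N ∅ ∅ 0 m := by
  unfold Gc
  apply Finset.card_le_card
  intro x hx
  rw [Finset.mem_filter] at hx ⊢
  refine ⟨hx.1, fun t => by simp, by simp [missSet_empty]⟩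

lemma Gc_mono_r {k N m : ℕ} (banned S : Finset (Fin N)) (r : ℕ) :
    Gc k N banned S r m ≤ Gc k N banned S (r+1) m := by
  rw [Gc_split]; exact Nat.le_add_right _ _

/-- key structural bound: a proper coloring avoiding `b` misses at most
`N - 1 - pit k m` colors of `S` (when `b ∉ S`). -/
lemma miss_bound {k N m : ℕ} {S : Finset (Fin N)} {b : Fin N} (hbS : b ∉ S)
    {x : Fin (m+1) → Fin N} (hx : x ∈ probSpace k N (m+1))
    (hav : ∀ t, x t ≠ b) :
    (missSet S x).card + pit k m + 1 ≤ N := by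
  set V : Finset (Fin N) := (wdw k m).image (fun j => x j.castSucc) with hV
  have hinj : Set.InjOn (fun j : Fin m => x j.castSucc) (wdw k m) := by
    intro j hj j' hj' he
    by_contra hne
    simp only [wdw, coe_filter, Set.mem_setOf_eq] at hj hj'
    have hvne : (j : ℕ) ≠ (j' : ℕ) := fun h => hne (Fin.ext h)
    have hne2 : j.castSucc ≠ j'.castSucc := by
      intro h; exact hne (Fin.castSucc_injective _ h)
    rcases lt_or_gt_of_ne hvne with h | h
    · refine mem_probSpace.1 hx j.castSucc j'.castSucc hne2 ?_ he
      simpa using adj_of_between h (le_of_lt j'.isLt) hj.2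
    · refine mem_probSpace.1 hx j'.castSucc j.castSucc (Ne.symm hne2) ?_ he.symm
      simpa using adj_of_between h (le_of_lt j.isLt) hj'.2
  have hVcard : V.card = pit k m := by
    rw [hV, card_image_of_injOn hinj, card_wdw]
  have hd1 : Disjoint (missSet S x) V := by
    rw [Finset.disjoint_left]
    intro a ha hav'
    simp only [hV, Finset.mem_image] at hav'
    obtain ⟨j, -, hj2⟩ := hav'
    exact ((Finset.mem_filter.1 ha).2 j.castSucc) hj2
  have hd2 : Disjoint (missSet S x ∪ V) {b} := by
    rw [Finset.disjoint_right]
    intro a ha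
    rw [Finset.mem_singleton] at ha
    subst ha
    rw [Finset.mem_union]
    rintro (h | h)
    · exact hbS (Finset.mem_filter.1 h).1
    · simp only [hV, Finset.mem_image] at h
      obtain ⟨j, -, hj2⟩ := h
      exact hav j.castSucc hj2
  have := Finset.card_le_univ (missSet S x ∪ V ∪ {b})
  rw [Finset.card_union_of_disjoint hd2, Finset.card_union_of_disjoint hd1,
    hVcard, Finset.card_singleton, Fintype.card_fin] at this
  omega

lemma Gc_zero {k N : ℕ} (banned S : Finset (Fin N)) (r : ℕ) :
    Gc k N banned S r 0 = if S.card ≤ r then 1 else 0 := by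
  unfold Gc
  have hps : probSpace k N 0 = Finset.univ := by
    unfold probSpace
    apply Finset.filter_true_of_mem
    intro x _ i
    exact i.elim0
  have huniv : (Finset.univ : Finset (Fin 0 → Fin N)) = {fun i => i.elim0} := by
    apply Finset.eq_singleton_iff_unique_mem.2
    exact ⟨Finset.mem_univ _, fun y _ => funext (fun i => i.elim0)⟩
  rw [hps, huniv, Finset.filter_singleton]
  have hmiss : missSet S (fun i : Fin 0 => i.elim0) = S := by
    apply Finset.filter_true_of_mem
    intro a _ t
    exact t.elim0
  by_cases hc : S.card ≤ r
  · rw [if_pos hc, if_pos ⟨fun t => t.elim0, by rw [hmiss]; exact hc⟩,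
      Finset.card_singleton]
  · rw [if_neg hc, if_neg (fun h => hc (by rw [← hmiss]; exact h.2)), Finset.card_empty]

lemma domination {k N : ℕ} {S : Finset (Fin N)} {b : Fin N} (hbS : b ∉ S) :
    ∀ m, (∀ t, t < m → pit k t + 2 ≤ N) → ∀ r,
      Gc k N ∅ S r m * Gc k N {b} ∅ 0 m ≤ Gc k N {b} S r m * Gc k N ∅ ∅ 0 m := by
  intro m
  induction m with
  | zero =>
    intro _ r
    simp only [Gc_zero]
    by_cases hc : S.card ≤ r <;> simp [hc]
  | succ m ih =>
    intro hpi r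
    have hw : pit k m + 2 ≤ N := hpi m (Nat.lt_succ_self m)
    have ihm := ih (fun t ht => hpi t (Nat.lt_succ_of_lt ht))
    have hSb : ∀ a ∈ S, a ∉ ({b} : Finset (Fin N)) := by
      intro a ha
      rw [Finset.mem_singleton]
      rintro rfl
      exact hbS ha
    have hS0 : ∀ a ∈ S, a ∉ (∅ : Finset (Fin N)) := fun a _ => Finset.notMem_empty a
    have hE0 : ∀ a ∈ (∅ : Finset (Fin N)), a ∉ (∅ : Finset (Fin N)) :=
      fun a ha => absurd ha (Finset.notMem_empty a)
    have hEb : ∀ a ∈ (∅ : Finset (Fin N)), a ∉ ({b} : Finset (Fin N)) :=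
      fun a ha => absurd ha (Finset.notMem_empty a)
    set w := pit k m with hwdef
    set B' := N - w - 1 with hB'
    have hcard0 : N - w - (∅ : Finset (Fin N)).card = B' + 1 := by
      rw [Finset.card_empty]; omega
    have hcard1 : N - w - ({b} : Finset (Fin N)).card = B' := by
      rw [Finset.card_singleton]
    -- recursions
    have E1 := Gc_rec (k := k) (N := N) (m := m) (banned := (∅ : Finset (Fin N))) hS0 r
    have E2 := Gc_rec (k := k) (N := N) (m := m) (banned := ({b} : Finset (Fin N))) hSb r
    have E3 := Gc_rec (k := k) (N := N) (m := m) (banned := (∅ : Finset (Fin N))) hE0 0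
    have E4 := Gc_rec (k := k) (N := N) (m := m) (banned := ({b} : Finset (Fin N))) hEb 0
    rw [hcard0] at E1 E3
    rw [hcard1] at E2 E4
    rw [Gc_banned_empty_eq (∅ : Finset (Fin N)) 1] at E3
    rw [Gc_banned_empty_eq ({b} : Finset (Fin N)) 1] at E4
    have hT : Gc k N ∅ ∅ 0 (m+1) = (B' + 1) * Gc k N ∅ ∅ 0 m := by omega
    have hT' : Gc k N {b} ∅ 0 (m+1) = B' * Gc k N {b} ∅ 0 m := by omega
    by_cases hcase : r + w + 2 ≤ N
    · -- main case : r + 1 ≤ B'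
      have hr1B : r + 1 ≤ B' := by omega
      rw [hT, hT']
      -- cast to ℤ
      have E1z : (Gc k N ∅ S r (m+1) : ℤ)
          = ((B' : ℤ) + 1) * Gc k N ∅ S r m + (r+1) * Gc k N ∅ S (r+1) m
            - (r+1) * Gc k N ∅ S r m := by
        have := congrArg (Nat.cast : ℕ → ℤ) E1
        push_cast at this
        linarith
      have E2z : (Gc k N {b} S r (m+1) : ℤ)
          = B' * Gc k N {b} S r m + (r+1) * Gc k N {b} S (r+1) m
            - (r+1) * Gc k N {b} S r m := by
        have := congrArg (Nat.cast : ℕ → ℤ) E2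
        push_cast at this
        linarith
      zify
      rw [E1z, E2z]
      have d0 : (0:ℤ) ≤ ((B' : ℤ) + 1) * ((B' : ℤ) - (r+1))
          * ((Gc k N {b} S r m : ℤ) * (Gc k N ∅ ∅ 0 m : ℤ)
            - (Gc k N ∅ S r m : ℤ) * (Gc k N {b} ∅ 0 m : ℤ)) := by
        apply mul_nonneg
        · apply mul_nonneg
          · positivity
          · have : ((r:ℤ)+1) ≤ (B' : ℤ) := by exact_mod_cast hr1B
            linarith
        · have := ihm r
          have : ((Gc k N ∅ S r m * Gc k N {b} ∅ 0 m : ℕ) : ℤ)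
              ≤ ((Gc k N {b} S r m * Gc k N ∅ ∅ 0 m : ℕ) : ℤ) := by exact_mod_cast this
          push_cast at this
          linarith
      have d1 : (0:ℤ) ≤ ((B' : ℤ) + 1) * ((r:ℤ)+1)
          * ((Gc k N {b} S (r+1) m : ℤ) * (Gc k N ∅ ∅ 0 m : ℤ)
            - (Gc k N ∅ S (r+1) m : ℤ) * (Gc k N {b} ∅ 0 m : ℤ)) := by
        apply mul_nonneg
        · positivity
        · have := ihm (r+1)
          have : ((Gc k N ∅ S (r+1) m * Gc k N {b} ∅ 0 m : ℕ) : ℤ)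
              ≤ ((Gc k N {b} S (r+1) m * Gc k N ∅ ∅ 0 m : ℕ) : ℤ) := by exact_mod_cast this
          push_cast at this
          linarith
      have d2 : (0:ℤ) ≤ ((r:ℤ)+1)
          * ((Gc k N ∅ S (r+1) m : ℤ) - (Gc k N ∅ S r m : ℤ))
          * (Gc k N {b} ∅ 0 m : ℤ) := by
        apply mul_nonneg
        · apply mul_nonneg
          · positivity
          · have := Gc_mono_r (∅ : Finset (Fin N)) S r (m := m) (k := k) (N := N)
            have : ((Gc k N ∅ S r m : ℕ) : ℤ) ≤ ((Gc k N ∅ S (r+1) m : ℕ) : ℤ) := by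
              exact_mod_cast this
            linarith
        · positivity
      linarith [d0, d1, d2]
    · -- degenerate case : every avoid-b coloring has few missing colors
      have hcl : Gc k N {b} S r (m+1) = Gc k N {b} ∅ 0 (m+1) := by
        unfold Gc
        apply card_filter_ext_mem
        intro x hx
        constructor
        · rintro ⟨h1, -⟩
          exact ⟨h1, by simp [missSet_empty]⟩
        · rintro ⟨h1, -⟩
          refine ⟨h1, ?_⟩
          have hav : ∀ t, x t ≠ b := by
            intro t he
            exact (h1 t) (by rw [he]; exact Finset.mem_singleton_self b)
          have := miss_bound hbS hx hav
          omega
      rw [hcl]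
      calc Gc k N ∅ S r (m+1) * Gc k N {b} ∅ 0 (m+1)
          ≤ Gc k N ∅ ∅ 0 (m+1) * Gc k N {b} ∅ 0 (m+1) :=
            Nat.mul_le_mul_right _ (Gc_le_total S r)
        _ = Gc k N {b} ∅ 0 (m+1) * Gc k N ∅ ∅ 0 (m+1) := Nat.mul_comm _ _

lemma total_pos {k N : ℕ} : ∀ m, (∀ t, t < m → pit k t + 2 ≤ N) →
    0 < Gc k N ∅ ∅ 0 m := by
  intro m
  induction m with
  | zero =>
    intro _
    rw [Gc_zero]
    simp
  | succ m ih =>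
    intro hpi
    have hw := hpi m (Nat.lt_succ_self m)
    have hE0 : ∀ a ∈ (∅ : Finset (Fin N)), a ∉ (∅ : Finset (Fin N)) :=
      fun a ha => absurd ha (Finset.notMem_empty a)
    have E3 := Gc_rec (k := k) (N := N) (m := m) (banned := (∅ : Finset (Fin N))) hE0 0
    rw [Gc_banned_empty_eq (∅ : Finset (Fin N)) 1, Finset.card_empty] at E3
    have h1 : Gc k N ∅ ∅ 0 (m+1) = (N - pit k m - 0) * Gc k N ∅ ∅ 0 m := by omega
    rw [h1]
    exact Nat.mul_pos (by omega) (ih (fun t ht => hpi t (Nat.lt_succ_of_lt ht)))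

lemma total_eq {k N m : ℕ} : Gc k N ∅ ∅ 0 m = (probSpace k N m).card := by
  unfold Gc
  refine congrArg Finset.card ?_
  apply Finset.filter_true_of_mem
  intro x _
  exact ⟨fun t => Finset.notMem_empty _, by simp [missSet_empty]⟩

lemma missSet_card_le_zero_iff {N m : ℕ} {S : Finset (Fin N)} {x : Fin m → Fin N} :
    (missSet S x).card ≤ 0 ↔ ∀ a ∈ S, ∃ t, x t = a := by
  rw [Nat.le_zero, Finset.card_eq_zero]
  simp only [missSet]
  rw [Finset.filter_eq_empty_iff]
  constructor
  · intro h a ha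
    have := h ha
    push_neg at this
    exact this
  · intro h a ha hnone
    obtain ⟨t, ht⟩ := h a ha
    exact (hnone t) ht

lemma useAll_eq {k N m : ℕ} (S : Finset (Fin N)) :
    ((probSpace k N m).filter (fun x => ∀ a ∈ S, ∃ t, x t = a)).card
      = Gc k N ∅ S 0 m := by
  unfold Gc
  apply card_filter_ext
  intro x
  rw [missSet_card_le_zero_iff]
  simp [Finset.notMem_empty]

lemma avoid_split {k N m : ℕ} (b : Fin N) :
    ((probSpace k N m).filter (fun x => ∃ t, x t = b)).card
      + Gc k N {b} ∅ 0 m = (probSpace k N m).card := by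
  have := Finset.card_filter_add_card_filter_not
    (s := probSpace k N m) (p := fun x : Fin m → Fin N => ∃ t, x t = b)
  rw [← this]
  congr 1
  unfold Gc
  apply card_filter_ext
  intro x
  simp only [missSet_empty, Finset.card_empty, Nat.le_refl, and_true,
    Finset.mem_singleton]
  push_neg
  constructor
  · intro h t; exact h t
  · intro h t; exact h t

lemma use_split {k N m : ℕ} {S : Finset (Fin N)} {b : Fin N} (hbS : b ∉ S) :
    Gc k N ∅ S 0 m =
      ((probSpace k N m).filter (fun x => ∀ a ∈ insert b S, ∃ t, x t = a)).card
      + Gc k N {b} S 0 m := by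
  rw [← useAll_eq S]
  have := Finset.card_filter_add_card_filter_not
    (s := (probSpace k N m).filter (fun x => ∀ a ∈ S, ∃ t, x t = a))
    (p := fun x : Fin m → Fin N => ∃ t, x t = b)
  rw [← this]
  congr 1
  · rw [Finset.filter_filter]
    apply card_filter_ext
    intro x
    rw [Finset.forall_mem_insert]
    tauto
  · rw [Finset.filter_filter]
    unfold Gc
    apply card_filter_ext
    intro x
    rw [missSet_card_le_zero_iff]
    simp only [Finset.mem_singleton]
    push_neg
    constructor
    · rintro ⟨h1, h2⟩
      exact ⟨fun t => h2 t, h1⟩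
    · rintro ⟨h1, h2⟩
      exact ⟨h2, fun t => h1 t⟩

lemma step_L {k N m : ℕ} {S : Finset (Fin N)} {b : Fin N} (hbS : b ∉ S)
    (hpi : ∀ t, t < m → pit k t + 2 ≤ N) :
    ((probSpace k N m).filter (fun x => ∀ a ∈ insert b S, ∃ t, x t = a)).card
        * (probSpace k N m).card
      ≤ ((probSpace k N m).filter (fun x => ∀ a ∈ S, ∃ t, x t = a)).card
        * ((probSpace k N m).filter (fun x => ∃ t, x t = b)).card := by
  have hdom := domination hbS m hpi 0
  rw [total_eq, use_split hbS] at hdom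
  have h3 := avoid_split (k := k) (N := N) (m := m) b
  rw [useAll_eq S, use_split hbS, ← h3]
  rw [← h3] at hdom
  nlinarith [hdom]

lemma peel {k N m : ℕ} (hpi : ∀ t, t < m → pit k t + 2 ≤ N) (S : Finset (Fin N)) :
    ((probSpace k N m).filter (fun x => ∀ a ∈ S, ∃ t, x t = a)).card
        * (probSpace k N m).card ^ S.card
      ≤ (probSpace k N m).card *
          ∏ a ∈ S, ((probSpace k N m).filter (fun x => ∃ t, x t = a)).card := by
  induction S using Finset.induction_on with
  | empty =>
    simp only [Finset.card_empty, pow_zero, Finset.prod_empty, mul_one]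
    apply Nat.le_of_eq
    refine congrArg Finset.card ?_
    apply Finset.filter_true_of_mem
    intro x _ a ha
    exact absurd ha (Finset.notMem_empty a)
  | @insert b S hbS ih =>
    rw [Finset.card_insert_of_notMem hbS, Finset.prod_insert hbS, pow_succ]
    calc ((probSpace k N m).filter (fun x => ∀ a ∈ insert b S, ∃ t, x t = a)).card
          * ((probSpace k N m).card ^ S.card * (probSpace k N m).card)
        = (((probSpace k N m).filter (fun x => ∀ a ∈ insert b S, ∃ t, x t = a)).card
            * (probSpace k N m).card) * (probSpace k N m).card ^ S.card := by ring
      _ ≤ (((probSpace k N m).filter (fun x => ∀ a ∈ S, ∃ t, x t = a)).card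
            * ((probSpace k N m).filter (fun x => ∃ t, x t = b)).card)
            * (probSpace k N m).card ^ S.card :=
          Nat.mul_le_mul_right _ (step_L hbS hpi)
      _ = (((probSpace k N m).filter (fun x => ∀ a ∈ S, ∃ t, x t = a)).card
            * (probSpace k N m).card ^ S.card)
            * ((probSpace k N m).filter (fun x => ∃ t, x t = b)).card := by ring
      _ ≤ ((probSpace k N m).card *
            ∏ a ∈ S, ((probSpace k N m).filter (fun x => ∃ t, x t = a)).card)
            * ((probSpace k N m).filter (fun x => ∃ t, x t = b)).card :=
          Nat.mul_le_mul_right _ ih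
      _ = (probSpace k N m).card *
            (((probSpace k N m).filter (fun x => ∃ t, x t = b)).card *
              ∏ a ∈ S, ((probSpace k N m).filter (fun x => ∃ t, x t = a)).card) := by
          ring

end CNC

/-- Let `k ≥ 3`, `N = φ(k)`, `m ≥ 1`, and assume `π_t + 2 ≤ N` for all `1 ≤ t ≤ m`.
Then the events `E_a^c` (some coordinate equals `a`) are negatively correlated:
`P(⋂_a E_a^c) ≤ ∏_a P(E_a^c)`, with `P` the uniform measure on `Ω`. -/
theorem coupon_negative_correlation (k N m : ℕ) (hk : 3 ≤ k)
    (hN : N = Nat.totient k) (hm : 1 ≤ m)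
    (hpi : ∀ t : ℕ, t < m → pit k t + 2 ≤ N) :
    (((probSpace k N m).filter
        (fun x => ∀ a : Fin N, ∃ t : Fin m, x t = a)).card : ℝ) /
        ((probSpace k N m).card : ℝ) ≤
      ∏ a : Fin N,
        ((((probSpace k N m).filter (fun x => ∃ t : Fin m, x t = a)).card : ℝ) /
          ((probSpace k N m).card : ℝ)) := by
  have hTpos : 0 < (probSpace k N m).card := by
    rw [← CNC.total_eq]
    exact CNC.total_pos m hpi
  have hpeel := CNC.peel hpi (Finset.univ : Finset (Fin N))
  rw [Finset.card_univ, Fintype.card_fin] at hpeel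
  have hALL : ((probSpace k N m).filter
        (fun x => ∀ a : Fin N, ∃ t : Fin m, x t = a)).card
      = ((probSpace k N m).filter
        (fun x => ∀ a ∈ (Finset.univ : Finset (Fin N)), ∃ t, x t = a)).card := by
    apply CNC.card_filter_ext
    intro x
    simp
  rw [Finset.prod_div_distrib, Finset.prod_const, Finset.card_univ, Fintype.card_fin]
  rw [div_le_div_iff₀ (by exact_mod_cast hTpos) (by positivity)]
  rw [hALL]
  have h2 : ((probSpace k N m).filter
        (fun x => ∀ a ∈ (Finset.univ : Finset (Fin N)), ∃ t, x t = a)).card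
        * (probSpace k N m).card ^ N
      ≤ (∏ a : Fin N,
          ((probSpace k N m).filter (fun x => ∃ t, x t = a)).card)
          * (probSpace k N m).card := by
    calc _ ≤ _ := hpeel
      _ = _ := Nat.mul_comm _ _
  exact_mod_cast h2
end

section
/- Fix ε ∈ (0,1). There exist C > 0 and x₀ (depending only on ε) such that for every real x ≥ x₀, every positive integer k, every integer t with 1 ≤ t ≤ log x, and all distinct integers n_1,…,n_t in [−x², x²], one has |P(n_1,…,n_t ∈ S(ā)) − σ^t| ≤ C·σ^t/(log x)^{16}. -/
open scoped Classical

/-- `z(x) = exp(((1-ε)/2)·log x·log₃x/log₂x)`. -/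
noncomputable def zParam (ε x : ℝ) : ℝ :=
  Real.exp ((1 - ε) / 2 * Real.log x * Real.log (Real.log (Real.log x)) /
    Real.log (Real.log x))

/-- The set of sieving primes `S = {s prime : (log x)^20 < s ≤ z, s ∤ k}`. -/
noncomputable def sievePrimes (ε x : ℝ) (k : ℕ) : Finset ℕ :=
  (Finset.range (⌊zParam ε x⌋₊ + 1)).filter
    (fun s : ℕ => s.Prime ∧ (Real.log x) ^ (20 : ℕ) < (s : ℝ) ∧
      (s : ℝ) ≤ zParam ε x ∧ ¬ s ∣ k)

/-- `σ = ∏_{s ∈ S} (1 - 1/s)`. -/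
noncomputable def sigmaParam (ε x : ℝ) (k : ℕ) : ℝ :=
  ∏ s ∈ sievePrimes ε x k, (1 - 1 / (s : ℝ))

/-- The probability, over `ā = (a_s)_{s ∈ S}` with each `a_s` independent and uniform
among the residues mod `s`, that all of `n 0, …, n (t-1)` lie in
`S(ā) = {n : n ≢ a_s (mod s) for all s ∈ S}`. -/
noncomputable def probAllUnsieved (ε x : ℝ) (k : ℕ) {t : ℕ} (n : Fin t → ℤ) : ℝ :=
  ((((sievePrimes ε x k).pi (fun s => Finset.range s)).filter
      (fun a => ∀ i : Fin t, ∀ s : ℕ, ∀ hs : s ∈ sievePrimes ε x k,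
        n i % (s : ℤ) ≠ (a s hs : ℤ))).card : ℝ) /
    ((((sievePrimes ε x k).pi (fun s => Finset.range s))).card : ℝ)

/- ## Elementary real inequalities -/

private lemma pow_one_sub_le (y : ℝ) (hy0 : 0 ≤ y) (hy1 : y ≤ 1) :
    ∀ m : ℕ, (1 - y) ^ m ≤ 1 - m * y + (m : ℝ) ^ 2 * y ^ 2 := by
  intro m
  induction m with
  | zero => simp
  | succ m ih =>
    have h1 : (0:ℝ) ≤ 1 - y := by linarith
    have h2 : (1 - y) ^ (m+1) = (1-y)^m * (1-y) := by ring
    have h3 : (1-y)^m * (1-y) ≤ (1 - m*y + (m:ℝ)^2*y^2) * (1-y) :=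
      mul_le_mul_of_nonneg_right ih h1
    rw [h2]
    refine h3.trans ?_
    push_cast
    nlinarith [sq_nonneg y, sq_nonneg ((m:ℝ)*y),
      mul_nonneg (mul_nonneg (sq_nonneg (m:ℝ)) hy0) (mul_nonneg hy0 hy0)]

private lemma weierstrass {ι : Type*} (s : Finset ι) (e : ι → ℝ)
    (h0 : ∀ i ∈ s, 0 ≤ e i) (h1 : ∀ i ∈ s, e i ≤ 1) :
    1 - ∑ i ∈ s, e i ≤ ∏ i ∈ s, (1 - e i) := by
  induction s using Finset.induction_on with
  | empty => simp
  | @insert a s' ha ih =>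
    rw [Finset.sum_insert ha, Finset.prod_insert ha]
    have hsum : 0 ≤ ∑ i ∈ s', e i :=
      Finset.sum_nonneg fun i hi => h0 i (Finset.mem_insert_of_mem hi)
    have ih' := ih (fun i hi => h0 i (Finset.mem_insert_of_mem hi))
      (fun i hi => h1 i (Finset.mem_insert_of_mem hi))
    have hea0 : 0 ≤ e a := h0 a (Finset.mem_insert_self a s')
    have hea1 : e a ≤ 1 := h1 a (Finset.mem_insert_self a s')
    nlinarith [ih', mul_nonneg hea0 hsum]

private lemma prod_one_add_le {ι : Type*} (s : Finset ι) (e : ι → ℝ)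
    (h0 : ∀ i ∈ s, 0 ≤ e i) :
    ∏ i ∈ s, (1 + e i) ≤ Real.exp (∑ i ∈ s, e i) := by
  rw [Real.exp_sum]
  refine Finset.prod_le_prod (fun i hi => by linarith [h0 i hi]) (fun i hi => ?_)
  have := Real.add_one_le_exp (e i); linarith

private lemma exp_le_one_add (u : ℝ) (h0 : 0 ≤ u) (h : u ≤ 1/2) :
    Real.exp u ≤ 1 + 2*u := by
  have h1 : 1 - u ≤ Real.exp (-u) := by have := Real.add_one_le_exp (-u); linarith
  have h2 : Real.exp u * Real.exp (-u) = 1 := by rw [← Real.exp_add]; simp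
  nlinarith [Real.exp_pos u, Real.exp_pos (-u)]

private lemma factor_up_good (t : ℕ) (sR : ℝ) (hs1 : 1 ≤ sR) :
    1 - (t:ℝ)/sR ≤ (1 - 1/sR)^t := by
  have h0 : (0:ℝ) < sR := by linarith
  have hy1 : 1/sR ≤ 1 := by rw [div_le_one h0]; linarith
  have hy0 : (0:ℝ) < 1/sR := by positivity
  have hb := one_add_mul_le_pow (show (-2:ℝ) ≤ -(1/sR) by linarith) t
  calc 1 - (t:ℝ)/sR = 1 + (t:ℝ) * (-(1/sR)) := by ring
    _ ≤ (1 + -(1/sR))^t := hb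
    _ = (1 - 1/sR)^t := by rw [← sub_eq_add_neg]

private lemma factor_pow_up (t : ℕ) (sR : ℝ) (hs1 : 1 ≤ sR) :
    (1 - 1/sR)^t ≤ 1 - (t:ℝ)/sR + (t:ℝ)^2/sR^2 := by
  have h0 : (0:ℝ) < sR := by linarith
  have hy0 : (0:ℝ) ≤ 1/sR := by positivity
  have hy1 : 1/sR ≤ 1 := by rw [div_le_one h0]; linarith
  have h := pow_one_sub_le (1/sR) hy0 hy1 t
  have he : 1 - (t:ℝ)*(1/sR) + (t:ℝ)^2*(1/sR)^2 = 1 - (t:ℝ)/sR + (t:ℝ)^2/sR^2 := by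
    field_simp
  linarith [he ▸ h]

/-- Per-factor sandwich, abstract real version. -/
private lemma sandwich_core (g u v e : ℝ)
    (hu0 : 0 ≤ u) (hu8 : u ≤ 1/8) (hv0 : 0 ≤ v) (hvu : v ≤ u)
    (hB : 1 - u ≤ g) (hP : g ≤ 1 - u + u^2) (hg0 : 0 ≤ g)
    (he : e = 2*u + 2*u^2 ∨ (e = 2*u^2 ∧ v = u)) :
    0 ≤ e ∧ e ≤ 1/2 ∧ 0 ≤ 1 - v ∧
    1 - v ≤ g * (1 + e) ∧ g * (1 - e) ≤ 1 - v := by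
  have hu2 : u^2 ≤ (1/8)*u := by nlinarith [mul_le_mul_of_nonneg_right hu8 hu0]
  have hu20 : 0 ≤ u^2 := sq_nonneg u
  have he2 : 2*u^2 ≤ e := by rcases he with h | ⟨h, -⟩ <;> rw [h] <;> nlinarith
  have he0 : 0 ≤ e := by linarith
  have hehalf : e ≤ 1/2 := by
    rcases he with h | ⟨h, -⟩ <;> rw [h] <;> nlinarith
  have hghalf : (1/2:ℝ) ≤ g := by linarith
  have hge : u^2 ≤ g * e := by
    have h4 : e*(1/2) ≤ e*g := mul_le_mul_of_nonneg_left hghalf he0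
    nlinarith
  refine ⟨he0, hehalf, by linarith, ?_, ?_⟩
  · rcases he with h | ⟨h, hveq⟩
    · have h1 : (1-u) * (1+2*u) ≤ g * (1+2*u) :=
        mul_le_mul_of_nonneg_right hB (by linarith)
      have h2 : g * (1+2*u) ≤ g * (1+e) :=
        mul_le_mul_of_nonneg_left (by rw [h]; nlinarith) hg0
      have h3 : (1:ℝ) ≤ (1-u)*(1+2*u) := by nlinarith
      linarith
    · have h1 : 0 ≤ g * e := mul_nonneg hg0 he0
      have h2 : g * (1+e) = g + g*e := by ring
      rw [hveq]
      linarith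
  · have h2 : g * (1-e) = g - g*e := by ring
    linarith

/-- Per-factor sandwich. -/
private lemma sandwich (t r : ℕ) (sR eR : ℝ) (h1s : 1 ≤ sR) (h8t : 8*(t:ℝ) ≤ sR)
    (ht : 1 ≤ t) (hrt : r ≤ t)
    (heR : eR = (if r < t then 2*(t:ℝ)/sR else 0) + 2*(t:ℝ)^2/sR^2) :
    0 ≤ eR ∧ eR ≤ 1/2 ∧ 0 ≤ (1 - 1/sR)^t ∧ 0 ≤ 1 - (r:ℝ)/sR ∧
    1 - (r:ℝ)/sR ≤ (1 - 1/sR)^t * (1 + eR) ∧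
    (1 - 1/sR)^t * (1 - eR) ≤ 1 - (r:ℝ)/sR := by
  have hs0 : (0:ℝ) < sR := by linarith
  have ht1 : (1:ℝ) ≤ (t:ℝ) := by exact_mod_cast ht
  have hts : (t:ℝ)/sR ≤ 1/8 := by rw [div_le_iff₀ hs0]; linarith
  have hts0 : 0 ≤ (t:ℝ)/sR := by positivity
  have hrtR : (r:ℝ) ≤ (t:ℝ) := by exact_mod_cast hrt
  have hrs : (r:ℝ)/sR ≤ (t:ℝ)/sR := by gcongr
  have hrs0 : 0 ≤ (r:ℝ)/sR := by positivity
  have hB := factor_up_good t sR h1s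
  have hP := factor_pow_up t sR h1s
  rw [← div_pow] at hP
  have hg0 : (0:ℝ) ≤ (1 - 1/sR)^t := by
    apply pow_nonneg
    have : 1/sR ≤ 1 := by rw [div_le_one hs0]; linarith
    linarith
  have he : eR = 2*((t:ℝ)/sR) + 2*((t:ℝ)/sR)^2 ∨
      (eR = 2*((t:ℝ)/sR)^2 ∧ (r:ℝ)/sR = (t:ℝ)/sR) := by
    by_cases hb : r < t
    · left; rw [heR, if_pos hb]; ring
    · right
      have hrt' : r = t := le_antisymm hrt (not_lt.mp hb)
      subst hrt'
      exact ⟨by rw [heR, if_neg hb]; ring, rfl⟩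
  have hc := sandwich_core ((1 - 1/sR)^t) ((t:ℝ)/sR) ((r:ℝ)/sR) eR
    hts0 hts hrs0 hrs hB hP hg0 he
  exact ⟨hc.1, hc.2.1, hg0, hc.2.2.1, hc.2.2.2.1, hc.2.2.2.2⟩
private lemma card_dvd_filter (T : Finset ℕ) (hTp : ∀ s ∈ T, s.Prime)
    (d : ℤ) (hd : d ≠ 0) (x : ℝ) (hx : 0 < x) (hdx : |(d:ℝ)| ≤ 2 * x ^ 2)
    (hL : 1 ≤ Real.log x) :
    ((T.filter (fun s : ℕ => (s:ℤ) ∣ d)).card : ℝ) ≤ 4 * Real.log x := by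
  set L := Real.log x with hLdef
  set D := T.filter (fun s : ℕ => (s:ℤ) ∣ d) with hD
  have hprod : (∏ p ∈ D, p) ∣ d.natAbs := by
    refine Finset.prod_primes_dvd _ (fun p hp => ?_) (fun p hp => ?_)
    · exact (hTp p (Finset.mem_filter.mp hp).1).prime
    · have h1 : (p:ℤ) ∣ (d.natAbs : ℤ) := Int.dvd_natAbs.mpr (Finset.mem_filter.mp hp).2
      exact_mod_cast h1
  have hpos : 0 < d.natAbs := Int.natAbs_pos.mpr hd
  have hle : (∏ p ∈ D, p) ≤ d.natAbs := Nat.le_of_dvd hpos hprod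
  have h2pow : 2 ^ D.card ≤ (∏ p ∈ D, p) := by
    rw [← Finset.prod_const]
    exact Finset.prod_le_prod' (fun p hp => (hTp p (Finset.mem_filter.mp hp).1).two_le)
  have hreal : (2:ℝ) ^ D.card ≤ 2 * x ^ 2 := by
    have h1 : ((2 ^ D.card : ℕ) : ℝ) ≤ ((d.natAbs : ℕ) : ℝ) := by
      exact_mod_cast h2pow.trans hle
    have h2 : ((d.natAbs : ℕ) : ℝ) = |(d:ℝ)| := by
      rw [Nat.cast_natAbs]; norm_cast
    push_cast at h1
    rw [h2] at h1
    exact h1.trans hdx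
  have hlog : (D.card : ℝ) * Real.log 2 ≤ Real.log 2 + 2 * L := by
    have h1 : Real.log ((2:ℝ) ^ D.card) ≤ Real.log (2 * x ^ 2) :=
      Real.log_le_log (by positivity) hreal
    rw [Real.log_pow, Real.log_mul (by norm_num) (by positivity), Real.log_pow] at h1
    push_cast at h1
    linarith
  have hl2 : (0.6931471803:ℝ) < Real.log 2 := Real.log_two_gt_d9
  have hl2' : Real.log 2 < 0.6931471808 := Real.log_two_lt_d9
  have hc0 : (0:ℝ) ≤ (D.card : ℝ) := Nat.cast_nonneg _
  nlinarith

/- ## Combinatorial product formula -/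

/-- number of distinct residues of the `n i` mod `s` -/
noncomputable def resCount {t : ℕ} (n : Fin t → ℤ) (s : ℕ) : ℕ :=
  (Finset.image (fun i => (n i % (s : ℤ)).toNat) Finset.univ).card

private lemma resImage_subset {t : ℕ} (n : Fin t → ℤ) (s : ℕ) (hs : 0 < s) :
    Finset.image (fun i => (n i % (s : ℤ)).toNat) Finset.univ ⊆ Finset.range s := by
  intro b hb
  simp only [Finset.mem_image, Finset.mem_univ, true_and] at hb
  obtain ⟨i, rfl⟩ := hb
  have hs' : (0:ℤ) < (s:ℤ) := by exact_mod_cast hs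
  have h1 : 0 ≤ n i % (s:ℤ) := Int.emod_nonneg _ (by exact_mod_cast hs.ne')
  have h2 : n i % (s:ℤ) < (s:ℤ) := Int.emod_lt_of_pos _ hs'
  rw [Finset.mem_range]
  omega

private lemma resCount_le_card {t : ℕ} (n : Fin t → ℤ) (s : ℕ) : resCount n s ≤ t := by
  simpa [resCount] using (Finset.card_image_le (s := (Finset.univ : Finset (Fin t)))
    (f := fun i => (n i % (s : ℤ)).toNat))

private lemma filter_res_card {t : ℕ} (n : Fin t → ℤ) (s : ℕ) (hs : 0 < s) :
    ((Finset.range s).filter (fun b : ℕ => ∀ i, n i % (s:ℤ) ≠ (b:ℤ))).card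
      = s - resCount n s := by
  have hsub := resImage_subset n s hs
  have hset : ((Finset.range s).filter (fun b : ℕ => ∀ i, n i % (s:ℤ) ≠ (b:ℤ)))
      = Finset.range s \ Finset.image (fun i => (n i % (s : ℤ)).toNat) Finset.univ := by
    ext b
    simp only [Finset.mem_filter, Finset.mem_sdiff, Finset.mem_image, Finset.mem_univ,
      true_and, not_exists]
    constructor
    · rintro ⟨hbr, hb⟩
      refine ⟨hbr, fun i hi => ?_⟩
      have h1 : 0 ≤ n i % (s:ℤ) := Int.emod_nonneg _ (by exact_mod_cast hs.ne')
      exact hb i (by omega)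
    · rintro ⟨hbr, hb⟩
      refine ⟨hbr, fun i hi => ?_⟩
      have h1 : 0 ≤ n i % (s:ℤ) := Int.emod_nonneg _ (by exact_mod_cast hs.ne')
      exact hb i (by omega)
  rw [hset, Finset.card_sdiff_of_subset hsub, Finset.card_range, resCount]

private lemma prob_eq_prod (ε x : ℝ) (k : ℕ) {t : ℕ} (n : Fin t → ℤ)
    (hpos : ∀ s ∈ sievePrimes ε x k, 0 < s) :
    probAllUnsieved ε x k n
      = ∏ s ∈ sievePrimes ε x k, (1 - (resCount n s : ℝ) / s) := by
  set S := sievePrimes ε x k with hS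
  have hfe : (S.pi fun s => Finset.range s).filter
        (fun a => ∀ i : Fin t, ∀ s : ℕ, ∀ hs : s ∈ S, n i % (s : ℤ) ≠ (a s hs : ℤ))
      = S.pi (fun s => (Finset.range s).filter (fun b : ℕ => ∀ i, n i % (s:ℤ) ≠ (b:ℤ))) := by
    ext a
    simp only [Finset.mem_filter, Finset.mem_pi]
    constructor
    · rintro ⟨h1, h2⟩ s hs
      exact ⟨h1 s hs, fun i => h2 i s hs⟩
    · intro h
      exact ⟨fun s hs => (h s hs).1, fun i s hs => (h s hs).2 i⟩
  rw [probAllUnsieved]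
  rw [Finset.filter_congr_decidable] at hfe ⊢
  rw [hfe, Finset.card_pi, Finset.card_pi]
  rw [Nat.cast_prod, Nat.cast_prod, ← Finset.prod_div_distrib]
  refine Finset.prod_congr rfl (fun s hs => ?_)
  have hps := hpos s hs
  rw [Finset.filter_congr_decidable, filter_res_card n s hps, Finset.card_range]
  have hle : resCount n s ≤ s := by
    have := Finset.card_le_card (resImage_subset n s hps)
    simpa [resCount] using this
  have hs0 : (s:ℝ) ≠ 0 := by exact_mod_cast hps.ne'
  rw [Nat.cast_sub hle]
  field_simp

/- ## Main theorem -/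


set_option maxHeartbeats 2000000

/-- Fix `ε ∈ (0,1)`.  There are `C > 0` and `x₀` such that for all `x ≥ x₀`, every
positive integer `k`, every `1 ≤ t ≤ log x` and all distinct integers
`n_1, …, n_t ∈ [-x², x²]`, one has
`|P(n₁,…,n_t ∈ S(ā)) - σ^t| ≤ C·σ^t/(log x)^16`. -/
theorem sieve_quasi_independence (ε : ℝ) (hε0 : 0 < ε) (hε1 : ε < 1) :
    ∃ C : ℝ, 0 < C ∧ ∃ x₀ : ℝ, ∀ x : ℝ, x₀ ≤ x → ∀ k : ℕ, 0 < k →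
      ∀ t : ℕ, 1 ≤ t → (t : ℝ) ≤ Real.log x →
      ∀ n : Fin t → ℤ, Function.Injective n → (∀ i, |(n i : ℝ)| ≤ x ^ (2 : ℕ)) →
      |probAllUnsieved ε x k n - (sigmaParam ε x k) ^ t| ≤
        C * (sigmaParam ε x k) ^ t / (Real.log x) ^ (16 : ℕ) := by
  refine ⟨100, by norm_num, Real.exp (Real.exp 4), ?_⟩
  intro x hx k hk t ht htL n hninj hnx
  set L := Real.log x with hLdef
  have hx0 : (0:ℝ) < x := lt_of_lt_of_le (Real.exp_pos _) hx
  have hL5 : (5:ℝ) ≤ L := by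
    have h1 : Real.exp 4 = Real.log (Real.exp (Real.exp 4)) := (Real.log_exp _).symm
    have h2 : Real.log (Real.exp (Real.exp 4)) ≤ L := Real.log_le_log (Real.exp_pos _) hx
    have h3 : (5:ℝ) ≤ Real.exp 4 := by nlinarith [Real.add_one_le_exp (4:ℝ)]
    linarith
  have hL0 : (0:ℝ) < L := by linarith
  clear_value L
  have ht1 : (1:ℝ) ≤ (t:ℝ) := by exact_mod_cast ht
  set S := sievePrimes ε x k with hSdef
  -- membership facts
  have hmem : ∀ s ∈ S, s.Prime ∧ L ^ 20 < (s:ℝ) ∧ (s:ℝ) ≤ zParam ε x := by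
    intro s hs
    rw [hSdef] at hs
    unfold sievePrimes at hs
    rw [Finset.mem_filter] at hs
    rw [hLdef]
    exact ⟨hs.2.1, hs.2.2.1, hs.2.2.2.1⟩
  have hpos : ∀ s ∈ S, 0 < s := fun s hs => (hmem s hs).1.pos
  have hprob : probAllUnsieved ε x k n = ∏ s ∈ S, (1 - (resCount n s : ℝ)/(s:ℝ)) :=
    prob_eq_prod ε x k n hpos
  have hsig : (sigmaParam ε x k) ^ t = ∏ s ∈ S, (1 - 1/(s:ℝ))^t := by
    rw [sigmaParam, ← Finset.prod_pow]
  clear_value S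
  have hL20pos : (0:ℝ) < L ^ 20 := by positivity
  have h516 : (152587890625:ℝ) ≤ L ^ 16 := by
    have h := pow_le_pow_left₀ (by norm_num : (0:ℝ) ≤ 5) hL5 16
    have : ((5:ℝ))^16 = 152587890625 := by norm_num
    linarith
  have hL16pos : (0:ℝ) < L ^ 16 := by positivity
  have hkey : ∀ s ∈ S, (1:ℝ) ≤ (s:ℝ) ∧ 8*(t:ℝ) ≤ (s:ℝ) ∧ L^20 < (s:ℝ) := by
    intro s hs
    obtain ⟨hp, hlb, -⟩ := hmem s hs
    have h1 : (1:ℝ) ≤ (s:ℝ) := by exact_mod_cast hp.one_lt.le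
    have h5 : (5:ℝ)^19 ≤ L^19 := pow_le_pow_left₀ (by norm_num) hL5 19
    have h8 : (8:ℝ) ≤ (5:ℝ)^19 := by norm_num
    have h8L : 8*L ≤ L^20 := by
      have hh : L^20 = L^19 * L := by ring
      nlinarith
    exact ⟨h1, by nlinarith, hlb⟩
  -- the error terms
  set e : ℕ → ℝ := fun s =>
    (if resCount n s < t then 2*(t:ℝ)/(s:ℝ) else 0) + 2*(t:ℝ)^2/(s:ℝ)^2 with hedef
  set E := ∑ s ∈ S, e s with hEdef
  have hfacts : ∀ s ∈ S,
      0 ≤ e s ∧ e s ≤ 1/2 ∧ 0 ≤ (1 - 1/(s:ℝ))^t ∧ 0 ≤ 1 - (resCount n s : ℝ)/(s:ℝ) ∧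
      1 - (resCount n s : ℝ)/(s:ℝ) ≤ (1 - 1/(s:ℝ))^t * (1 + e s) ∧
      (1 - 1/(s:ℝ))^t * (1 - e s) ≤ 1 - (resCount n s : ℝ)/(s:ℝ) := by
    intro s hs
    obtain ⟨h1s, h8t, -⟩ := hkey s hs
    exact sandwich t (resCount n s) (s:ℝ) (e s) h1s h8t ht (resCount_le_card n s)
      (by rw [hedef])
  clear_value e
  have hE0 : 0 ≤ E := Finset.sum_nonneg (fun s hs => (hfacts s hs).1)
  clear_value E
  -- counting bad primes
  set B := S.filter (fun s => resCount n s < t) with hBdef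
  clear_value B
  have hBcard : (B.card : ℝ) ≤ (t:ℝ)^2 * (4*L) := by
    have hsub : B ⊆ Finset.biUnion (Finset.univ : Finset (Fin t)).offDiag
        (fun p => S.filter (fun s : ℕ => (s:ℤ) ∣ (n p.1 - n p.2))) := by
      intro s hsB
      rw [hBdef] at hsB
      have hsS : s ∈ S := (Finset.mem_filter.mp hsB).1
      have hr : resCount n s < t := (Finset.mem_filter.mp hsB).2
      have hsp : 0 < s := hpos s hsS
      have hnotinj : ¬ Set.InjOn (fun i => (n i % (s:ℤ)).toNat)
          ((Finset.univ : Finset (Fin t)) : Set (Fin t)) := by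
        intro hinj
        have hc := Finset.card_image_of_injOn hinj
        rw [Finset.card_univ, Fintype.card_fin] at hc
        rw [resCount] at hr
        omega
      rw [Set.InjOn] at hnotinj
      push_neg at hnotinj
      obtain ⟨i, -, j, -, heq, hne⟩ := hnotinj
      have hsz : ((s:ℤ)) ≠ 0 := by exact_mod_cast hsp.ne'
      have hsz' : (0:ℤ) < (s:ℤ) := by exact_mod_cast hsp
      have h1 : 0 ≤ n i % (s:ℤ) := Int.emod_nonneg _ hsz
      have h2 : 0 ≤ n j % (s:ℤ) := Int.emod_nonneg _ hsz
      have heq' : (n i % (s:ℤ)).toNat = (n j % (s:ℤ)).toNat := heq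
      have hmodeq : n i % (s:ℤ) = n j % (s:ℤ) := by omega
      have hdvd : (s:ℤ) ∣ (n j - n i) := Int.ModEq.dvd hmodeq
      refine Finset.mem_biUnion.mpr ⟨(j, i), ?_, Finset.mem_filter.mpr ⟨hsS, hdvd⟩⟩
      exact Finset.mem_offDiag.mpr ⟨Finset.mem_univ _, Finset.mem_univ _, fun h => hne h.symm⟩
    have h1 : (B.card : ℝ) ≤ ∑ p ∈ (Finset.univ : Finset (Fin t)).offDiag,
        ((S.filter (fun s : ℕ => (s:ℤ) ∣ (n p.1 - n p.2))).card : ℝ) := by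
      have := (Finset.card_le_card hsub).trans Finset.card_biUnion_le
      exact_mod_cast this
    have h2 : ∀ p ∈ (Finset.univ : Finset (Fin t)).offDiag,
        ((S.filter (fun s : ℕ => (s:ℤ) ∣ (n p.1 - n p.2))).card : ℝ) ≤ 4*L := by
      intro p hp
      have hpne : p.1 ≠ p.2 := (Finset.mem_offDiag.mp hp).2.2
      have hd : n p.1 - n p.2 ≠ 0 := sub_ne_zero.mpr (fun h => hpne (hninj h))
      have habs : |((n p.1 - n p.2 : ℤ):ℝ)| ≤ 2*x^2 := by
        push_cast
        calc |(n p.1:ℝ) - (n p.2:ℝ)| ≤ |(n p.1:ℝ)| + |(n p.2:ℝ)| := abs_sub _ _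
          _ ≤ x^2 + x^2 := add_le_add (hnx _) (hnx _)
          _ = 2*x^2 := by ring
      rw [hLdef]
      exact card_dvd_filter S (fun s hs => (hmem s hs).1) _ hd x hx0 habs
        (by rw [← hLdef]; linarith)
    have h3 : ∑ p ∈ (Finset.univ : Finset (Fin t)).offDiag,
        ((S.filter (fun s : ℕ => (s:ℤ) ∣ (n p.1 - n p.2))).card : ℝ)
        ≤ ((Finset.univ : Finset (Fin t)).offDiag.card : ℝ) * (4*L) := by
      have := Finset.sum_le_card_nsmul _ _ (4*L) h2
      rwa [nsmul_eq_mul] at this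
    have h4 : (((Finset.univ : Finset (Fin t)).offDiag.card : ℝ)) ≤ (t:ℝ)^2 := by
      have hoff : (Finset.univ : Finset (Fin t)).offDiag.card = t*t - t := by
        rw [Finset.offDiag_card, Finset.card_univ, Fintype.card_fin]
      have hle' : (Finset.univ : Finset (Fin t)).offDiag.card ≤ t*t := by omega
      calc ((Finset.univ : Finset (Fin t)).offDiag.card : ℝ) ≤ ((t*t : ℕ):ℝ) := by
            exact_mod_cast hle'
        _ = (t:ℝ)^2 := by push_cast; ring
    have hL40 : (0:ℝ) ≤ 4*L := by linarith
    nlinarith [mul_le_mul_of_nonneg_right h4 hL40]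
  -- sum of reciprocals bound
  have hlogz : Real.log (zParam ε x) ≤ L := by
    unfold zParam
    rw [Real.log_exp, ← hLdef]
    have hL2 : 1 ≤ Real.log L := by
      rw [Real.le_log_iff_exp_le hL0]
      have := Real.exp_one_lt_d9
      linarith
    rcases le_or_gt (Real.log (Real.log L)) 0 with h | h
    · have hnum : (1-ε)/2 * L * Real.log (Real.log L) ≤ 0 :=
        mul_nonpos_of_nonneg_of_nonpos (by nlinarith) h
      have := div_nonpos_of_nonpos_of_nonneg hnum (by linarith : (0:ℝ) ≤ Real.log L)
      linarith
    · have hlog2 : Real.log (Real.log L) ≤ Real.log L := by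
        linarith [Real.log_le_sub_one_of_pos (by linarith : (0:ℝ) < Real.log L)]
      have hfrac : Real.log (Real.log L) / Real.log L ≤ 1 := by
        rw [div_le_one (by linarith)]; exact hlog2
      have hfrac0 : 0 ≤ Real.log (Real.log L) / Real.log L :=
        div_nonneg h.le (by linarith)
      have hre : (1-ε)/2 * L * Real.log (Real.log L) / Real.log L
          = ((1-ε)/2 * L) * (Real.log (Real.log L) / Real.log L) := by ring
      rw [hre]
      have h1 : ((1-ε)/2*L) * (Real.log (Real.log L)/Real.log L) ≤ ((1-ε)/2*L) * 1 :=
        mul_le_mul_of_nonneg_left hfrac (by nlinarith)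
      nlinarith
  have hSsum : ∑ s ∈ S, 1/(s:ℝ) ≤ 1 + L := by
    set N := ⌊zParam ε x⌋₊ with hNdef
    have hsubI : S ⊆ Finset.Icc 1 N := by
      intro s hs
      have h1 : s ∈ Finset.range (N + 1) := by
        rw [hSdef] at hs
        unfold sievePrimes at hs
        exact (Finset.mem_filter.mp hs).1
      rw [Finset.mem_range] at h1
      rw [Finset.mem_Icc]
      exact ⟨(hpos s hs), by omega⟩
    have h1 : ∑ s ∈ S, 1/(s:ℝ) ≤ ∑ m ∈ Finset.Icc 1 N, 1/(m:ℝ) :=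
      Finset.sum_le_sum_of_subset_of_nonneg hsubI (fun i _ _ => by positivity)
    have h2 : ∑ m ∈ Finset.Icc 1 N, 1/(m:ℝ) = ((harmonic N : ℚ) : ℝ) := by
      rw [harmonic_eq_sum_Icc]
      push_cast
      simp [one_div]
    have h3 : ((harmonic N : ℚ) : ℝ) ≤ 1 + Real.log N := harmonic_le_one_add_log N
    have h4 : Real.log N ≤ L := by
      rcases Nat.eq_zero_or_pos N with h | h
      · rw [h]; simp; linarith
      · have hN1 : (1:ℝ) ≤ (N:ℝ) := by exact_mod_cast h
        have hNz : (N:ℝ) ≤ zParam ε x := Nat.floor_le (le_of_lt (Real.exp_pos _))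
        have := Real.log_le_log (by linarith) hNz
        linarith
    linarith
  -- bound on E
  have hEbound : E ≤ 9 / L^16 := by
    have hsplit : E = (∑ s ∈ S, (if resCount n s < t then 2*(t:ℝ)/(s:ℝ) else 0))
        + ∑ s ∈ S, 2*(t:ℝ)^2/(s:ℝ)^2 := by
      rw [hEdef, hedef, ← Finset.sum_add_distrib]
    have hT1a : (∑ s ∈ S, if resCount n s < t then 2*(t:ℝ)/(s:ℝ) else 0)
        = ∑ s ∈ B, 2*(t:ℝ)/(s:ℝ) := by
      rw [hBdef]; exact (Finset.sum_filter _ _).symm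
    have hT1b : ∑ s ∈ B, 2*(t:ℝ)/(s:ℝ) ≤ (B.card:ℝ) * (2*L/L^20) := by
      have hper : ∀ s ∈ B, 2*(t:ℝ)/(s:ℝ) ≤ 2*L/L^20 := by
        intro s hsB
        have hsS : s ∈ S := by
          rw [hBdef] at hsB; exact Finset.mem_of_mem_filter s hsB
        obtain ⟨h1s, h8t, hLs⟩ := hkey s hsS
        exact div_le_div₀ (by linarith) (by linarith) hL20pos (by linarith)
      have h := Finset.sum_le_card_nsmul B _ _ hper
      rwa [nsmul_eq_mul] at h
    have ht2 : (t:ℝ)^2 ≤ L^2 := by nlinarith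
    have heq1 : (L^2*(4*L))*(2*L/L^20) = 8/L^16 := by
      have hL0' : L ≠ 0 := ne_of_gt hL0
      field_simp
      ring
    have hT1 : ∑ s ∈ B, 2*(t:ℝ)/(s:ℝ) ≤ 8/L^16 := by
      calc ∑ s ∈ B, 2*(t:ℝ)/(s:ℝ) ≤ (B.card:ℝ) * (2*L/L^20) := hT1b
        _ ≤ ((t:ℝ)^2*(4*L))*(2*L/L^20) :=
            mul_le_mul_of_nonneg_right hBcard (by positivity)
        _ ≤ (L^2*(4*L))*(2*L/L^20) := by
            refine mul_le_mul_of_nonneg_right ?_ (by positivity)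
            exact mul_le_mul_of_nonneg_right ht2 (by linarith)
        _ = 8/L^16 := heq1
    have hT2 : ∑ s ∈ S, 2*(t:ℝ)^2/(s:ℝ)^2 ≤ 1/L^16 := by
      have hper : ∀ s ∈ S, 2*(t:ℝ)^2/(s:ℝ)^2 ≤ (2*L^2/L^20) * (1/(s:ℝ)) := by
        intro s hs
        obtain ⟨h1s, h8t, hLs⟩ := hkey s hs
        have hs0 : (0:ℝ) < (s:ℝ) := by linarith
        have h1 : 2*(t:ℝ)^2/(s:ℝ)^2 ≤ 2*L^2/(L^20*(s:ℝ)) := by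
          refine div_le_div₀ (by positivity) (by linarith) (by positivity) ?_
          nlinarith [mul_le_mul_of_nonneg_right (le_of_lt hLs) (le_of_lt hs0)]
        have h2 : 2*L^2/(L^20*(s:ℝ)) = (2*L^2/L^20)*(1/(s:ℝ)) := by
          field_simp
        rw [h2] at h1
        exact h1
      have hsum : ∑ s ∈ S, 2*(t:ℝ)^2/(s:ℝ)^2 ≤ ∑ s ∈ S, (2*L^2/L^20)*(1/(s:ℝ)) :=
        Finset.sum_le_sum hper
      have hfac : ∑ s ∈ S, (2*L^2/L^20)*(1/(s:ℝ)) = (2*L^2/L^20) * ∑ s ∈ S, 1/(s:ℝ) :=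
        (Finset.mul_sum _ _ _).symm
      have hc0 : (0:ℝ) ≤ 2*L^2/L^20 := by positivity
      have h3 : (2*L^2/L^20) * (∑ s ∈ S, 1/(s:ℝ)) ≤ (2*L^2/L^20)*(1+L) :=
        mul_le_mul_of_nonneg_left hSsum hc0
      have h4 : (2*L^2/L^20)*(1+L) ≤ 1/L^16 := by
        rw [div_mul_eq_mul_div, div_le_div_iff₀ (by positivity) hL16pos]
        nlinarith [mul_le_mul_of_nonneg_left hL5 (le_of_lt (pow_pos hL0 19)),
          mul_le_mul_of_nonneg_left hL5 (le_of_lt (pow_pos hL0 18)),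
          le_of_lt (pow_pos hL0 18), le_of_lt (pow_pos hL0 19)]
      linarith
    rw [hsplit, hT1a]
    have hcomb := add_le_add hT1 hT2
    have h9 : (8:ℝ)/L^16 + 1/L^16 = 9/L^16 := by ring
    rw [h9] at hcomb
    exact hcomb
  have hEhalf : E ≤ 1/2 := by
    have : (9:ℝ)/L^16 ≤ 1/2 := by
      rw [div_le_iff₀ hL16pos]; linarith
    linarith
  -- product bounds
  set G := ∏ s ∈ S, (1 - 1/(s:ℝ))^t with hGdef
  have hG0 : 0 ≤ G := Finset.prod_nonneg (fun s hs => (hfacts s hs).2.2.1)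
  clear_value G
  have hProdUp : ∏ s ∈ S, (1 - (resCount n s : ℝ)/(s:ℝ)) ≤ G * (1 + 2*E) := by
    have h1 : ∏ s ∈ S, (1 - (resCount n s : ℝ)/(s:ℝ))
        ≤ ∏ s ∈ S, ((1 - 1/(s:ℝ))^t * (1 + e s)) :=
      Finset.prod_le_prod (fun s hs => (hfacts s hs).2.2.2.1)
        (fun s hs => (hfacts s hs).2.2.2.2.1)
    have h2 : ∏ s ∈ S, ((1 - 1/(s:ℝ))^t * (1 + e s))
        = G * ∏ s ∈ S, (1 + e s) := by rw [hGdef]; exact Finset.prod_mul_distrib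
    have h3 : ∏ s ∈ S, (1 + e s) ≤ Real.exp E := by
      rw [hEdef]; exact prod_one_add_le S e (fun s hs => (hfacts s hs).1)
    have h4 : Real.exp E ≤ 1 + 2*E := exp_le_one_add E hE0 hEhalf
    calc ∏ s ∈ S, (1 - (resCount n s : ℝ)/(s:ℝ))
        ≤ G * ∏ s ∈ S, (1 + e s) := by rw [← h2]; exact h1
      _ ≤ G * Real.exp E := mul_le_mul_of_nonneg_left h3 hG0
      _ ≤ G * (1 + 2*E) := mul_le_mul_of_nonneg_left h4 hG0
  have hProdLow : G * (1 - E) ≤ ∏ s ∈ S, (1 - (resCount n s : ℝ)/(s:ℝ)) := by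
    have h1 : ∏ s ∈ S, ((1 - 1/(s:ℝ))^t * (1 - e s))
        ≤ ∏ s ∈ S, (1 - (resCount n s : ℝ)/(s:ℝ)) := by
      refine Finset.prod_le_prod (fun s hs => ?_) (fun s hs => (hfacts s hs).2.2.2.2.2)
      obtain ⟨he0', heh', hg0', -, -, -⟩ := hfacts s hs
      have h1e : (0:ℝ) ≤ 1 - e s := by linarith
      exact mul_nonneg hg0' h1e
    have h2 : ∏ s ∈ S, ((1 - 1/(s:ℝ))^t * (1 - e s))
        = G * ∏ s ∈ S, (1 - e s) := by rw [hGdef]; exact Finset.prod_mul_distrib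
    have h3 : 1 - E ≤ ∏ s ∈ S, (1 - e s) := by
      rw [hEdef]
      exact weierstrass S e (fun s hs => (hfacts s hs).1)
        (fun s hs => by
          obtain ⟨-, heh', -, -, -, -⟩ := hfacts s hs
          show e s ≤ 1
          linarith)
    calc G * (1 - E) ≤ G * ∏ s ∈ S, (1 - e s) := mul_le_mul_of_nonneg_left h3 hG0
      _ = ∏ s ∈ S, ((1 - 1/(s:ℝ))^t * (1 - e s)) := h2.symm
      _ ≤ _ := h1
  -- conclusion
  rw [hprob, hsig]
  have hGE0 : 0 ≤ G * E := mul_nonneg hG0 hE0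
  have habs : |∏ s ∈ S, (1 - (resCount n s : ℝ)/(s:ℝ)) - G| ≤ 2*(G*E) := by
    rw [abs_le]
    constructor <;> nlinarith
  have hfin : 2*(G*E) ≤ 100 * G / L^16 := by
    have h1 : 2*(G*E) ≤ 2*(G*(9/L^16)) := by
      have := mul_le_mul_of_nonneg_left hEbound hG0
      linarith
    have h2 : 2*(G*(9/L^16)) = 18*G/L^16 := by ring
    have h3 : (0:ℝ) ≤ 82*G/L^16 := div_nonneg (by linarith) (by positivity)
    have h4 : (100:ℝ)*G/L^16 = 18*G/L^16 + 82*G/L^16 := by ring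
    linarith
  exact habs.trans hfin
end

section
/- Let r ≥ 1 and let h_1 < h_2 < … < h_r be nonnegative integers, and let s be a prime. (a) If p is a prime with s ≠ p, then #{n ∈ ℤ/sℤ : ∏_{i=1}^r (n + h_i·p) = 0} equals the number of distinct residues among h_1,…,h_r modulo s; and if s = p then this count equals 1. (b) Fix i ∈ {1,…,r} and an integer q; if s ∤ q then #{n ∈ ℤ/sℤ : n·∏_{j≠i} ((h_j−h_i)·n + q) = 0} equals the number of distinct residues among h_1,…,h_r modulo s; and if s | q and s ∤ (h_j − h_i) for all j ≠ i, then this count equals 1. -/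
open scoped Classical


lemma card_filter_range_eq (s : ℕ) [NeZero s] (P : ZMod s → Prop) [DecidablePred P] :
    ((Finset.range s).filter (fun n : ℕ => P (n : ZMod s))).card =
    (Finset.univ.filter P).card := by
  have hs : 0 < s := Nat.pos_of_ne_zero (NeZero.ne s)
  refine Finset.card_nbij' (fun n => (n : ZMod s)) (fun x => x.val) ?_ ?_ ?_ ?_
  · intro n hn
    simp only [Finset.mem_coe, Finset.mem_filter, Finset.mem_range] at hn ⊢
    exact ⟨Finset.mem_univ _, hn.2⟩
  · intro x hx
    simp only [Finset.mem_coe, Finset.mem_filter, Finset.mem_range] at hx ⊢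
    refine ⟨ZMod.val_lt x, ?_⟩
    rw [ZMod.natCast_val, ZMod.cast_id]; exact hx.2
  · intro n hn
    simp only [Finset.mem_coe, Finset.mem_filter, Finset.mem_range] at hn
    exact ZMod.val_cast_of_lt hn.1
  · intro x hx
    show ((x.val : ℕ) : ZMod s) = x
    rw [ZMod.natCast_val, ZMod.cast_id]

lemma card_residues (r : ℕ) (h : Fin r → ℕ) (s : ℕ) [NeZero s] :
    (Finset.image (fun i : Fin r => h i % s) Finset.univ).card =
    (Finset.image (fun i : Fin r => ((h i : ZMod s))) Finset.univ).card := by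
  have hs : 0 < s := Nat.pos_of_ne_zero (NeZero.ne s)
  have heq : (Finset.image (fun i : Fin r => ((h i : ZMod s))) Finset.univ) =
      (Finset.image (fun i : Fin r => h i % s) Finset.univ).image
        (fun a : ℕ => (a : ZMod s)) := by
    rw [Finset.image_image]
    ext x
    simp [Function.comp, ZMod.natCast_mod]
  have hinj : Set.InjOn (fun a : ℕ => (a : ZMod s))
      ((Finset.image (fun i : Fin r => h i % s) Finset.univ) : Set ℕ) := by
    intro a ha b hb hab
    simp only [Finset.coe_image, Set.mem_image] at ha hb
    obtain ⟨i, -, rfl⟩ := ha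
    obtain ⟨j, -, rfl⟩ := hb
    have h1 := ZMod.val_cast_of_lt (Nat.mod_lt (h i) hs)
    have h2 := ZMod.val_cast_of_lt (Nat.mod_lt (h j) hs)
    rw [← h1, ← h2]; exact congrArg ZMod.val hab
  rw [heq, Finset.card_image_of_injOn hinj]

/-- Counting roots mod `s` of products of linear forms.  Let `h_1 < ⋯ < h_r` be
nonnegative integers and `s` a prime.
(a) For a prime `p ≠ s`, the number of `n` mod `s` with `∏ᵢ (n + hᵢ·p) ≡ 0 (mod s)`
equals the number of distinct residues of the `hᵢ` mod `s`; for `p = s` it equals `1`.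
(b) For fixed `i` and an integer `q`: if `s ∤ q`, the number of `n` mod `s` with
`n·∏_{j≠i} ((h_j - h_i)·n + q) ≡ 0 (mod s)` equals the number of distinct residues of
the `hᵢ` mod `s`; if `s ∣ q` and `s ∤ (h_j - h_i)` for all `j ≠ i`, it equals `1`. -/
theorem omega_of_linear_forms (r : ℕ) (hr : 1 ≤ r) (h : Fin r → ℕ)
    (hmono : StrictMono h) (s : ℕ) (hs : s.Prime) :
    (∀ p : ℕ, p.Prime → s ≠ p →
      ((Finset.range s).filter
          (fun n : ℕ => (s : ℤ) ∣ ∏ i : Fin r, ((n : ℤ) + (h i : ℤ) * (p : ℤ)))).card =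
        (Finset.image (fun i : Fin r => h i % s) Finset.univ).card) ∧
    (∀ p : ℕ, p.Prime → s = p →
      ((Finset.range s).filter
          (fun n : ℕ => (s : ℤ) ∣ ∏ i : Fin r, ((n : ℤ) + (h i : ℤ) * (p : ℤ)))).card = 1) ∧
    (∀ i : Fin r, ∀ q : ℤ, ¬ (s : ℤ) ∣ q →
      ((Finset.range s).filter
          (fun n : ℕ => (s : ℤ) ∣
            ((n : ℤ) * ∏ j ∈ Finset.univ.erase i,
              (((h j : ℤ) - (h i : ℤ)) * (n : ℤ) + q)))).card =
        (Finset.image (fun i : Fin r => h i % s) Finset.univ).card) ∧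
    (∀ i : Fin r, ∀ q : ℤ, (s : ℤ) ∣ q →
      (∀ j : Fin r, j ≠ i → ¬ (s : ℤ) ∣ ((h j : ℤ) - (h i : ℤ))) →
      ((Finset.range s).filter
          (fun n : ℕ => (s : ℤ) ∣
            ((n : ℤ) * ∏ j ∈ Finset.univ.erase i,
              (((h j : ℤ) - (h i : ℤ)) * (n : ℤ) + q)))).card = 1) := by
  refine ⟨?_, ?_, ?_, ?_⟩
  · intro p hp hsp
    haveI : Fact s.Prime := ⟨hs⟩
    haveI : NeZero s := ⟨hs.ne_zero⟩
    have hp0 : (p : ZMod s) ≠ 0 := by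
      rw [Ne, ZMod.natCast_eq_zero_iff]
      intro hd
      exact hsp ((Nat.prime_dvd_prime_iff_eq hs hp).mp hd)
    have hcongr : (Finset.range s).filter
          (fun n : ℕ => (s : ℤ) ∣ ∏ i : Fin r, ((n : ℤ) + (h i : ℤ) * (p : ℤ))) =
        (Finset.range s).filter
          (fun n : ℕ => (fun x : ZMod s => ∏ i : Fin r, (x + (h i : ZMod s) * p) = 0) (n : ZMod s)) := by
      apply Finset.filter_congr
      intro n _
      rw [← ZMod.intCast_zmod_eq_zero_iff_dvd]
      push_cast
      rfl
    rw [hcongr, card_filter_range_eq s (fun x : ZMod s => ∏ i : Fin r, (x + (h i : ZMod s) * p) = 0), card_residues r h s]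
    have hset : Finset.univ.filter (fun x : ZMod s => ∏ i : Fin r, (x + (h i : ZMod s) * p) = 0) =
        Finset.image (fun a : ZMod s => -(a * p))
          (Finset.image (fun i : Fin r => ((h i : ZMod s))) Finset.univ) := by
      ext x
      simp only [Finset.mem_filter, Finset.mem_univ, true_and, Finset.mem_image,
        Finset.prod_eq_zero_iff, exists_exists_and_eq_and]
      constructor
      · rintro ⟨i, hi⟩
        exact ⟨(h i : ZMod s), ⟨i, rfl⟩, neg_eq_of_add_eq_zero_left hi⟩
      · rintro ⟨a, ⟨j, rfl⟩, hx⟩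
        exact ⟨j, by rw [← hx]; ring⟩
    rw [hset, Finset.card_image_of_injective]
    intro a b hab
    simp only at hab
    exact mul_right_cancel₀ hp0 (neg_injective hab)

  -- Part a2
  · intro p hp hsp
    haveI : Fact s.Prime := ⟨hs⟩
    haveI : NeZero s := ⟨hs.ne_zero⟩
    subst hsp
    have hcongr : (Finset.range s).filter
          (fun n : ℕ => (s : ℤ) ∣ ∏ i : Fin r, ((n : ℤ) + (h i : ℤ) * (s : ℤ))) =
        (Finset.range s).filter
          (fun n : ℕ => (fun x : ZMod s => ∏ i : Fin r, (x + (h i : ZMod s) * s) = 0) (n : ZMod s)) := by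
      apply Finset.filter_congr
      intro n _
      rw [← ZMod.intCast_zmod_eq_zero_iff_dvd]
      push_cast
      rfl
    rw [hcongr, card_filter_range_eq s (fun x : ZMod s => ∏ i : Fin r, (x + (h i : ZMod s) * s) = 0)]
    have hset : Finset.univ.filter (fun x : ZMod s => ∏ i : Fin r, (x + (h i : ZMod s) * s) = 0) =
        {(0 : ZMod s)} := by
      ext x
      simp only [Finset.mem_filter, Finset.mem_univ, true_and, Finset.mem_singleton,
        ZMod.natCast_self, mul_zero, add_zero, Finset.prod_const, Finset.card_univ,
        Fintype.card_fin, pow_eq_zero_iff (Nat.one_le_iff_ne_zero.mp hr)]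
    rw [hset, Finset.card_singleton]
  · intro i q hq
    haveI : Fact s.Prime := ⟨hs⟩
    haveI : NeZero s := ⟨hs.ne_zero⟩
    have hQ : (q : ZMod s) ≠ 0 := by rwa [Ne, ZMod.intCast_zmod_eq_zero_iff_dvd]
    have hcongr : (Finset.range s).filter
          (fun n : ℕ => (s : ℤ) ∣
            ((n : ℤ) * ∏ j ∈ Finset.univ.erase i,
              (((h j : ℤ) - (h i : ℤ)) * (n : ℤ) + q))) =
        (Finset.range s).filter
          (fun n : ℕ => (fun x : ZMod s =>
            x * ∏ j ∈ Finset.univ.erase i,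
              (((h j : ZMod s) - (h i : ZMod s)) * x + (q : ZMod s)) = 0) (n : ZMod s)) := by
      apply Finset.filter_congr
      intro n _
      rw [← ZMod.intCast_zmod_eq_zero_iff_dvd]
      push_cast
      rfl
    rw [hcongr, card_filter_range_eq s (fun x : ZMod s =>
        x * ∏ j ∈ Finset.univ.erase i,
          (((h j : ZMod s) - (h i : ZMod s)) * x + (q : ZMod s)) = 0), card_residues r h s]
    set g : ZMod s → ZMod s :=
      fun a => if a = (h i : ZMod s) then 0 else -(q : ZMod s) * (a - (h i : ZMod s))⁻¹ with hg
    have hginj : Function.Injective g := by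
      intro a b hab
      simp only [hg] at hab
      by_cases ha : a = (h i : ZMod s) <;> by_cases hb : b = (h i : ZMod s)
      · rw [ha, hb]
      · rw [if_pos ha, if_neg hb] at hab
        exact absurd hab.symm
          (mul_ne_zero (neg_ne_zero.mpr hQ) (inv_ne_zero (sub_ne_zero.mpr hb)))
      · rw [if_neg ha, if_pos hb] at hab
        exact absurd hab
          (mul_ne_zero (neg_ne_zero.mpr hQ) (inv_ne_zero (sub_ne_zero.mpr ha)))
      · rw [if_neg ha, if_neg hb] at hab
        have h1 := mul_left_cancel₀ (neg_ne_zero.mpr hQ) hab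
        have h2 := inv_injective h1
        exact sub_left_injective h2
    have hset : Finset.univ.filter (fun x : ZMod s =>
        x * ∏ j ∈ Finset.univ.erase i,
          (((h j : ZMod s) - (h i : ZMod s)) * x + (q : ZMod s)) = 0) =
        Finset.image g (Finset.image (fun j : Fin r => ((h j : ZMod s))) Finset.univ) := by
      ext x
      simp only [Finset.mem_filter, Finset.mem_univ, true_and, Finset.mem_image,
        exists_exists_and_eq_and, mul_eq_zero, Finset.prod_eq_zero_iff, Finset.mem_erase]
      constructor
      · rintro (hx | ⟨j, ⟨hji, -⟩, hj⟩)
        · exact ⟨(h i : ZMod s), ⟨i, rfl⟩, by rw [hg]; simp [hx]⟩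
        · have hne : (h j : ZMod s) ≠ (h i : ZMod s) := by
            intro he
            rw [he, sub_self, zero_mul, zero_add] at hj
            exact hQ hj
          refine ⟨(h j : ZMod s), ⟨j, rfl⟩, ?_⟩
          rw [hg]
          simp only [if_neg hne]
          have h3 : ((h j : ZMod s) - (h i : ZMod s)) ≠ 0 := sub_ne_zero.mpr hne
          field_simp
          linear_combination -hj
      · rintro ⟨a, ⟨j, rfl⟩, hx⟩
        by_cases hne : (h j : ZMod s) = (h i : ZMod s)
        · left
          rw [hg] at hx
          simp only [if_pos hne] at hx
          exact hx.symm
        · right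
          have hji : j ≠ i := fun he => hne (by rw [he])
          refine ⟨j, ⟨hji, trivial⟩, ?_⟩
          rw [hg] at hx
          simp only [if_neg hne] at hx
          have h3 : ((h j : ZMod s) - (h i : ZMod s)) ≠ 0 := sub_ne_zero.mpr hne
          rw [← hx]
          field_simp
          ring
    rw [hset, Finset.card_image_of_injective _ hginj]
  · intro i q hq hji
    haveI : Fact s.Prime := ⟨hs⟩
    haveI : NeZero s := ⟨hs.ne_zero⟩
    have hQ : (q : ZMod s) = 0 := (ZMod.intCast_zmod_eq_zero_iff_dvd _ _).mpr hq
    have hcongr : (Finset.range s).filter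
          (fun n : ℕ => (s : ℤ) ∣
            ((n : ℤ) * ∏ j ∈ Finset.univ.erase i,
              (((h j : ℤ) - (h i : ℤ)) * (n : ℤ) + q))) =
        (Finset.range s).filter
          (fun n : ℕ => (fun x : ZMod s =>
            x * ∏ j ∈ Finset.univ.erase i,
              (((h j : ZMod s) - (h i : ZMod s)) * x + (q : ZMod s)) = 0) (n : ZMod s)) := by
      apply Finset.filter_congr
      intro n _
      rw [← ZMod.intCast_zmod_eq_zero_iff_dvd]
      push_cast
      rfl
    rw [hcongr, card_filter_range_eq s (fun x : ZMod s =>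
        x * ∏ j ∈ Finset.univ.erase i,
          (((h j : ZMod s) - (h i : ZMod s)) * x + (q : ZMod s)) = 0)]
    have hset : Finset.univ.filter (fun x : ZMod s =>
        x * ∏ j ∈ Finset.univ.erase i,
          (((h j : ZMod s) - (h i : ZMod s)) * x + (q : ZMod s)) = 0) = {(0 : ZMod s)} := by
      ext x
      simp only [Finset.mem_filter, Finset.mem_univ, true_and, Finset.mem_singleton,
        mul_eq_zero, Finset.prod_eq_zero_iff, Finset.mem_erase, hQ, add_zero]
      constructor
      · rintro (hx | ⟨j, ⟨hj, -⟩, hx⟩)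
        · exact hx
        · rcases hx with hc | hx
          · exfalso
            have := (ZMod.intCast_zmod_eq_zero_iff_dvd ((h j : ℤ) - (h i : ℤ)) s).not.mpr
              (hji j hj)
            push_cast at this
            exact this hc
          · exact hx
      · intro hx
        exact Or.inl hx
    rw [hset, Finset.card_singleton]
end
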